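/- arXiv:0808.0277 — 5 statements merged into one kernel-verified Lean document; each statement's English description precedes it below -/
import Mathlib

section
/- Let G and H be groups, let φ, ψ : G → H be homomorphisms, and let u, v ∈ H. Let Ĝ = G ∗ ⟨z⟩ and Ĥ = H ∗ ⟨z⟩ be the free products of G and H with an infinite cyclic group generated by z. Let φ̂_u : Ĝ → Ĥ be the homomorphism extending φ with φ̂_u(z) = u z u⁻¹, let ψ̂ : Ĝ → Ĥ be the homomorphism extending ψ with ψ̂(z) = z, and let φ̂_u^v : Ĝ → Ĥ be given by φ̂_u^v(x) = v⁻¹ φ̂_u(x) v. Then v = φ(g₀) u ψ(g₀)⁻¹ for some g₀ ∈ G (i.e., u and v are in the same doubly-twisted conjugacy class) if and only if there exists g ∈ G with g z g⁻¹ ∈ Eq(φ̂_u^v, ψ̂). -/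
/-- The generator `z` of the infinite cyclic free factor of `G ∗ ⟨z⟩`, where the free
product with an infinite cyclic group is realized as `Monoid.Coprod G (FreeGroup Unit)`. -/
def zEl (G : Type*) [Group G] : Monoid.Coprod G (FreeGroup Unit) :=
  Monoid.Coprod.inr (FreeGroup.of ())

/-- The extension `φ̂ᵤ : G ∗ ⟨z⟩ → H ∗ ⟨z⟩` of `φ : G → H` with `φ̂ᵤ(z) = u z u⁻¹`. -/
def hatPhi {G H : Type*} [Group G] [Group H] (φ : G →* H) (u : H) :
    Monoid.Coprod G (FreeGroup Unit) →* Monoid.Coprod H (FreeGroup Unit) :=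
  Monoid.Coprod.lift (Monoid.Coprod.inl.comp φ)
    (FreeGroup.lift fun _ => Monoid.Coprod.inl u * zEl H * (Monoid.Coprod.inl u)⁻¹)

/-- The extension `ψ̂ : G ∗ ⟨z⟩ → H ∗ ⟨z⟩` of `ψ : G → H` with `ψ̂(z) = z`. -/
def hatPsi {G H : Type*} [Group G] [Group H] (ψ : G →* H) :
    Monoid.Coprod G (FreeGroup Unit) →* Monoid.Coprod H (FreeGroup Unit) :=
  Monoid.Coprod.lift (Monoid.Coprod.inl.comp ψ) Monoid.Coprod.inr

/-- `φ^v : x ↦ v⁻¹ φ(x) v`. -/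
def conjHom {G H : Type*} [Group G] [Group H] (φ : G →* H) (v : H) : G →* H :=
  ((MulAut.conj v⁻¹).toMonoidHom).comp φ

/-- The equalizer subgroup `Eq(φ, ψ) = {g : φ g = ψ g}`. -/
def eqSubgroup {G H : Type*} [Group G] [Group H] (φ ψ : G →* H) : Subgroup G where
  carrier := {g | φ g = ψ g}
  one_mem' := by simp
  mul_mem' := by
    intro a b ha hb
    simp only [Set.mem_setOf_eq] at *
    rw [_root_.map_mul, _root_.map_mul, ha, hb]
  inv_mem' := by
    intro a ha
    simp only [Set.mem_setOf_eq] at *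
    rw [_root_.map_inv, _root_.map_inv, ha]

def sigmaShift (H : Type*) [Group H] : MulAut (ℤ → H) :=
  (MulEquiv.arrowCongr (Equiv.addRight (1:ℤ)) (MulEquiv.refl H)).symm.symm

noncomputable def detect (H : Type*) [Group H] :
    Monoid.Coprod H (FreeGroup Unit) →* SemidirectProduct (ℤ → H) (Multiplicative ℤ)
      (zpowersHom _ (sigmaShift H)) :=
  Monoid.Coprod.lift
    (SemidirectProduct.inl.comp (MonoidHom.mulSingle (fun _ : ℤ => H) 0))
    (FreeGroup.lift fun _ => SemidirectProduct.inr (Multiplicative.ofAdd 1))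

lemma eq_one_of_comm_z {H : Type*} [Group H] (e : H)
    (h : Monoid.Coprod.inl e * zEl H = zEl H * Monoid.Coprod.inl e) : e = 1 := by
  have := congrArg (detect H) h
  simp only [map_mul, detect, zEl, Monoid.Coprod.lift_apply_inl, Monoid.Coprod.lift_apply_inr,
    FreeGroup.lift_apply_of, MonoidHom.comp_apply] at this
  have hl := congrArg SemidirectProduct.left this
  erw [SemidirectProduct.mul_left, SemidirectProduct.mul_left, SemidirectProduct.left_inl,
    SemidirectProduct.left_inr, SemidirectProduct.right_inl, SemidirectProduct.right_inr] at hl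
  simp [SemidirectProduct.mul_left, sigmaShift] at hl
  have := congrFun hl 0
  simpa [Pi.mulSingle_apply] using this

lemma inl_conj_z_inj {H : Type*} [Group H] (a c : H)
    (h : Monoid.Coprod.inl a * zEl H * (Monoid.Coprod.inl a)⁻¹ =
      Monoid.Coprod.inl c * zEl H * (Monoid.Coprod.inl c)⁻¹) : a = c := by
  have h2 : Monoid.Coprod.inl a * zEl H
      = Monoid.Coprod.inl c * zEl H * (Monoid.Coprod.inl c)⁻¹ * Monoid.Coprod.inl a := by
    have := congrArg (· * Monoid.Coprod.inl a) h
    simpa [mul_assoc] using this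
  have key : Monoid.Coprod.inl (c⁻¹ * a) * zEl H = zEl H * Monoid.Coprod.inl (c⁻¹ * a) := by
    rw [map_mul, map_inv, mul_assoc, h2]
    group
  exact (inv_mul_eq_one.mp (eq_one_of_comm_z _ key)).symm

theorem same_class_iff_conjugate_z_in_equalizer' {G H : Type*} [Group G] [Group H]
    (φ ψ : G →* H) (u v : H) :
    (∃ g₀ : G, v = φ g₀ * u * (ψ g₀)⁻¹) ↔
    ∃ g : G, Monoid.Coprod.inl g * zEl G * (Monoid.Coprod.inl g)⁻¹ ∈
      eqSubgroup (conjHom (hatPhi φ u) (Monoid.Coprod.inl v)) (hatPsi ψ) := by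
  have key : ∀ g : G, (Monoid.Coprod.inl g * zEl G * (Monoid.Coprod.inl g)⁻¹ ∈
      eqSubgroup (conjHom (hatPhi φ u) (Monoid.Coprod.inl v)) (hatPsi ψ)) ↔
      v⁻¹ * φ g * u = ψ g := by
    intro g
    have hmem : (Monoid.Coprod.inl g * zEl G * (Monoid.Coprod.inl g)⁻¹ ∈
        eqSubgroup (conjHom (hatPhi φ u) (Monoid.Coprod.inl v)) (hatPsi ψ)) ↔
        conjHom (hatPhi φ u) (Monoid.Coprod.inl v) (Monoid.Coprod.inl g * zEl G * (Monoid.Coprod.inl g)⁻¹)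
        = hatPsi ψ (Monoid.Coprod.inl g * zEl G * (Monoid.Coprod.inl g)⁻¹) := Iff.rfl
    rw [hmem]
    have lhs_eq : conjHom (hatPhi φ u) (Monoid.Coprod.inl v)
        (Monoid.Coprod.inl g * zEl G * (Monoid.Coprod.inl g)⁻¹)
        = Monoid.Coprod.inl (v⁻¹ * φ g * u) * zEl H * (Monoid.Coprod.inl (v⁻¹ * φ g * u))⁻¹ := by
      simp [conjHom, hatPhi, zEl, map_mul, map_inv, mul_assoc]
    have rhs_eq : hatPsi ψ (Monoid.Coprod.inl g * zEl G * (Monoid.Coprod.inl g)⁻¹)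
        = Monoid.Coprod.inl (ψ g) * zEl H * (Monoid.Coprod.inl (ψ g))⁻¹ := by
      simp [hatPsi, zEl, map_mul, map_inv]
    rw [lhs_eq, rhs_eq]
    exact ⟨fun h => inl_conj_z_inj _ _ h, fun h => by rw [h]⟩
  constructor
  · rintro ⟨g, hg⟩
    exact ⟨g, (key g).mpr (by rw [hg]; group)⟩
  · rintro ⟨g, hg⟩
    refine ⟨g, ?_⟩
    have := (key g).mp hg
    rw [← this]; group
/-- `[v] = [u]` (doubly-twisted conjugacy for `(φ, ψ)`) iff there is
`g ∈ G` with `g z g⁻¹ ∈ Eq(φ̂ᵤᵛ, ψ̂)`, where `φ̂ᵤᵛ(x) = v⁻¹ φ̂ᵤ(x) v`. -/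
theorem same_class_iff_conjugate_z_in_equalizer {G H : Type*} [Group G] [Group H]
    (φ ψ : G →* H) (u v : H) :
    (∃ g₀ : G, v = φ g₀ * u * (ψ g₀)⁻¹) ↔
    ∃ g : G, Monoid.Coprod.inl g * zEl G * (Monoid.Coprod.inl g)⁻¹ ∈
      eqSubgroup (conjHom (hatPhi φ u) (Monoid.Coprod.inl v)) (hatPsi ψ) := by
  exact same_class_iff_conjugate_z_in_equalizer' φ ψ u v
end

section
/- Let G be a free group with basis g₁, …, g_n, let H be a free group, and let φ, ψ : G → H be homomorphisms. If the homomorphism φ ∗ ψ : G ∗ G → H has remnant, then φ(G) ∩ ψ(G) = {1}. -/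
/-! Basic definitions: cancellation in products of reduced words, remnant
of a homomorphism of free groups, and assorted constructions. -/

open FreeGroup

/-- `bpow w e` is `w` if `e = true` (exponent `+1`) and `w⁻¹` if `e = false`
(exponent `-1`). -/
def bpow {β : Type*} (w : FreeGroup β) (e : Bool) : FreeGroup β := if e then w else w⁻¹

/-- The number of letters cancelled between `a` and `b` when the product `a * b`
is brought to reduced form: `(|a| + |b| - |a * b|) / 2`. -/
def cancel {β : Type*} [DecidableEq β] (a b : FreeGroup β) : ℕ :=
  (FreeGroup.norm a + FreeGroup.norm b - FreeGroup.norm (a * b)) / 2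

/-- The maximal number of letters of the reduced word `η(gᵢ)` cancelled on its left
in a product `η(gⱼ)^ε * η(gᵢ)`, over all `j` and `ε = ±1` except `j = i, ε = -1`. -/
def maxLeftCancel {α β : Type*} [Fintype α] [DecidableEq α] [DecidableEq β]
    (η : FreeGroup α →* FreeGroup β) (i : α) : ℕ :=
  (Finset.univ.filter fun je : α × Bool => je ≠ (i, false)).sup
    fun je => cancel (bpow (η (FreeGroup.of je.1)) je.2) (η (FreeGroup.of i))

/-- The maximal number of letters of the reduced word `η(gᵢ)` cancelled on its right
in a product `η(gᵢ) * η(gⱼ)^ε`, over all `j` and `ε = ±1` except `j = i, ε = -1`. -/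
def maxRightCancel {α β : Type*} [Fintype α] [DecidableEq α] [DecidableEq β]
    (η : FreeGroup α →* FreeGroup β) (i : α) : ℕ :=
  (Finset.univ.filter fun je : α × Bool => je ≠ (i, false)).sup
    fun je => cancel (η (FreeGroup.of i)) (bpow (η (FreeGroup.of je.1)) je.2)

/-- `η` has remnant: for each generator `gᵢ`, the maximal left cancellation plus the
maximal right cancellation is strictly less than the length of `η(gᵢ)`, so a nonempty
middle subword (the remnant `Rem_η(gᵢ)`) always survives. -/
def HasRemnant {α β : Type*} [Fintype α] [DecidableEq α] [DecidableEq β]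
    (η : FreeGroup α →* FreeGroup β) : Prop :=
  ∀ i : α, maxLeftCancel η i + maxRightCancel η i < FreeGroup.norm (η (FreeGroup.of i))

/-- The length `|Rem_η(gᵢ)|` of the remnant word of `gᵢ`: the part of `η(gᵢ)` surviving
all maximal cancellations. -/
def remnantLength {α β : Type*} [Fintype α] [DecidableEq α] [DecidableEq β]
    (η : FreeGroup α →* FreeGroup β) (i : α) : ℕ :=
  FreeGroup.norm (η (FreeGroup.of i)) - maxLeftCancel η i - maxRightCancel η i

/-- The remnant `Rem_η(gᵢ)` occupies positions `[maxLeftCancel η i, |η(gᵢ)| - maxRightCancel η i)`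
of the reduced word `η(gᵢ)`.  It does not fully cancel in the reduced form of the product
`η(gᵢ) * w` iff the number of letters cancelled from the right end of `η(gᵢ)`, namely
`cancel (η(gᵢ)) w`, leaves some remnant letter alive. -/
def remnantSurvivesRightMul {α β : Type*} [Fintype α] [DecidableEq α] [DecidableEq β]
    (η : FreeGroup α →* FreeGroup β) (i : α) (w : FreeGroup β) : Prop :=
  cancel (η (FreeGroup.of i)) w + maxLeftCancel η i < FreeGroup.norm (η (FreeGroup.of i))

/-- The remnant `Rem_η(gᵢ)` does not fully cancel in the reduced form of the
product `w * η(gᵢ)`. -/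
def remnantSurvivesLeftMul {α β : Type*} [Fintype α] [DecidableEq α] [DecidableEq β]
    (η : FreeGroup α →* FreeGroup β) (i : α) (w : FreeGroup β) : Prop :=
  cancel w (η (FreeGroup.of i)) + maxRightCancel η i < FreeGroup.norm (η (FreeGroup.of i))

/-- The homomorphism `φ ∗ ψ : G ∗ G → H` on the free product `G ∗ G`, realized as the
free group on `α ⊕ α`, sending the generators of the first factor via `φ` and those of
the second factor via `ψ`. -/
def prodHom {α β : Type*} (φ ψ : FreeGroup α →* FreeGroup β) :
    FreeGroup (α ⊕ α) →* FreeGroup β :=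
  FreeGroup.lift (Sum.elim (fun i => φ (FreeGroup.of i)) (fun i => ψ (FreeGroup.of i)))

namespace RemnantProof

open FreeGroup List

variable {β : Type*} [DecidableEq β]

/-- Two adjacent letters do not cancel. -/
def Rel : (β × Bool) → (β × Bool) → Prop := fun a b => ¬(a.1 = b.1 ∧ a.2 = !b.2)

lemma chain'_reduce (L : List (β × Bool)) : List.Chain' Rel (reduce L) := by
  induction L with
  | nil => simp [Rel, List.Chain']
  | cons x L ih =>
    rw [reduce.cons]
    cases h : reduce L with
    | nil => simp [Rel, List.Chain']
    | cons y t =>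
      rw [h] at ih
      by_cases hc : x.1 = y.1 ∧ x.2 = !y.2
      · simp only [if_pos hc]
        exact ih.tail
      · simp only [if_neg hc]
        exact List.isChain_cons_cons.mpr ⟨hc, ih⟩

lemma reduce_eq_self_of_chain' {L : List (β × Bool)} (h : List.Chain' Rel L) :
    reduce L = L := by
  induction L with
  | nil => rfl
  | cons x L ih =>
    rw [reduce.cons, ih h.tail]
    cases L with
    | nil => rfl
    | cons y t =>
      have : ¬(x.1 = y.1 ∧ x.2 = !y.2) := (List.isChain_cons_cons.mp h).1
      simp [this]

lemma invRev_append (L1 L2 : List (β × Bool)) :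
    invRev (L1 ++ L2) = invRev L2 ++ invRev L1 := by
  simp [invRev]

lemma invRev_singleton (x : β × Bool) : invRev [x] = [(x.1, !x.2)] := by
  simp [invRev]

/-- Key splitting lemma: the reduced form of a product of two reduced words. -/
lemma split : ∀ (L1 L2 : List (β × Bool)), List.Chain' Rel L1 → List.Chain' Rel L2 →
    ∃ P X S, L1 = P ++ X ∧ L2 = invRev X ++ S ∧ reduce (L1 ++ L2) = P ++ S := by
  intro L1
  induction L1 using List.reverseRecOn with
  | nil =>
    intro L2 _ h2
    exact ⟨[], [], L2, rfl, by simp [invRev], by simpa using reduce_eq_self_of_chain' h2⟩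
  | append_singleton L1' t ih =>
    intro L2 h1 h2
    cases L2 with
    | nil =>
      exact ⟨L1' ++ [t], [], [], by simp, by simp [invRev],
        by simpa using reduce_eq_self_of_chain' h1⟩
    | cons h L2' =>
      by_cases hc : h = (t.1, !t.2)
      · have hstep : Red.Step ((L1' ++ [t]) ++ h :: L2') (L1' ++ L2') := by
          have he : (L1' ++ [t]) ++ h :: L2' = L1' ++ (t.1, t.2) :: (t.1, !t.2) :: L2' := by
            rw [hc]; simp
          rw [he]
          exact Red.Step.not
        obtain ⟨P, X, S, e1, e2, e3⟩ := ih L2' h1.left_of_append h2.tail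
        refine ⟨P, X ++ [t], S, by rw [e1]; simp, ?_, ?_⟩
        · rw [invRev_append, invRev_singleton, hc, e2]; simp
        · rw [reduce.Step.eq hstep, e3]
      · refine ⟨L1' ++ [t], [], h :: L2', by simp, by simp [invRev], ?_⟩
        apply reduce_eq_self_of_chain'
        apply h1.append h2
        intro p hp q hq
        simp only [List.getLast?_concat, Option.mem_def, Option.some.injEq] at hp
        simp only [List.head?_cons, Option.mem_def, Option.some.injEq] at hq
        subst hp; subst hq
        rintro ⟨h1', h2'⟩
        apply hc
        obtain ⟨q1, q2⟩ := h
        obtain ⟨t1, t2⟩ := t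
        simp only [Prod.mk.injEq] at h1' h2' ⊢
        refine ⟨h1'.symm, ?_⟩
        cases q2 <;> simp_all

lemma chain'_toWord (x : FreeGroup β) : List.Chain' Rel x.toWord := by
  rw [← reduce_toWord]; exact chain'_reduce _

lemma toWord_mul' (a b : FreeGroup β) : (a * b).toWord = reduce (a.toWord ++ b.toWord) := by
  have : a * b = mk (a.toWord ++ b.toWord) := by rw [← mul_mk, mk_toWord, mk_toWord]
  rw [this, toWord_mk]

lemma norm_def (x : FreeGroup β) : norm x = x.toWord.length := rfl

/-- Quantitative splitting for elements of the free group. -/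
lemma split' (a b : FreeGroup β) :
    ∃ P X S, a.toWord = P ++ X ∧ b.toWord = invRev X ++ S ∧ (a * b).toWord = P ++ S ∧
      cancel a b = X.length ∧ norm (a * b) + 2 * X.length = norm a + norm b := by
  obtain ⟨P, X, S, e1, e2, e3⟩ := split a.toWord b.toWord (chain'_toWord a) (chain'_toWord b)
  have hab : (a * b).toWord = P ++ S := by rw [toWord_mul', e3]
  have hna : norm a = P.length + X.length := by rw [norm_def, e1]; simp
  have hnb : norm b = X.length + S.length := by rw [norm_def, e2]; simp [invRev_length]
  have hnab : norm (a * b) = P.length + S.length := by rw [norm_def, hab]; simp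
  refine ⟨P, X, S, e1, e2, hab, ?_, by omega⟩
  unfold cancel
  omega

lemma norm_mul_cancel (a b : FreeGroup β) :
    norm (a * b) + 2 * cancel a b = norm a + norm b := by
  obtain ⟨P, X, S, _, _, _, h4, h5⟩ := split' a b
  omega

lemma cancel_le_left (a b : FreeGroup β) : cancel a b ≤ norm a := by
  obtain ⟨P, X, S, e1, _, _, h4, _⟩ := split' a b
  have : norm a = P.length + X.length := by rw [norm_def, e1]; simp
  omega

lemma cancel_le_right (a b : FreeGroup β) : cancel a b ≤ norm b := by
  obtain ⟨P, X, S, _, e2, _, h4, _⟩ := split' a b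
  have : norm b = X.length + S.length := by rw [norm_def, e2]; simp [invRev_length]
  omega

lemma cancel_unique {a b : FreeGroup β} {x : ℕ}
    (h : norm (a * b) + 2 * x = norm a + norm b) : cancel a b = x := by
  have := norm_mul_cancel a b
  omega

lemma cancel_inv_inv (a b : FreeGroup β) : cancel a b = cancel b⁻¹ a⁻¹ := by
  unfold cancel
  rw [← mul_inv_rev, norm_inv_eq, norm_inv_eq, norm_inv_eq, Nat.add_comm (norm b)]

lemma red_mul_invRev (Y : List (β × Bool)) : Red (Y ++ invRev Y) ([] : List (β × Bool)) := by
  induction Y with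
  | nil => simp only [invRev_empty, List.append_nil]; exact Red.refl
  | cons y Y ih =>
    have h1 : invRev (y :: Y) = invRev Y ++ [(y.1, !y.2)] := by
      have : y :: Y = [y] ++ Y := rfl
      rw [this, invRev_append, invRev_singleton]
    rw [h1]
    have he : (y :: Y) ++ (invRev Y ++ [(y.1, !y.2)]) =
        [y] ++ ((Y ++ invRev Y) ++ [(y.1, !y.2)]) := by simp
    rw [he]
    have h2 : Red ([y] ++ ((Y ++ invRev Y) ++ [(y.1, !y.2)]))
        ([y] ++ (([] : List (β × Bool)) ++ [(y.1, !y.2)])) :=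
      Red.append_append Red.refl (Red.append_append ih Red.refl)
    refine h2.trans ?_
    have : [y] ++ (([] : List (β × Bool)) ++ [(y.1, !y.2)]) = (y.1, y.2) :: (y.1, !y.2) :: [] := by
      simp
    rw [this]
    exact (Red.Step.cons_not).to_red

/-- The key cancellation lemma: if the cancellations on both sides of `b` do not
exhaust `b`, then the cancellation of `a*b` with `c` equals that of `b` with `c`. -/
lemma cancel_mul_left {a b c : FreeGroup β} (h : cancel a b + cancel b c < norm b) :
    cancel (a * b) c = cancel b c := by
  obtain ⟨P, X, S, ea, eb, eab, hx, hnx⟩ := split' a b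
  obtain ⟨P', Y, S', eb', ec, ebc, hy, hny⟩ := split' b c
  have hb1 : norm b = X.length + S.length := by rw [norm_def, eb]; simp [invRev_length]
  have hb2 : norm b = P'.length + Y.length := by rw [norm_def, eb']; simp
  have hxy : X.length + Y.length < norm b := by omega
  have hXP : X.length ≤ P'.length := by omega
  -- identify the common part
  have htake : invRev X = P'.take X.length := by
    have t1 : b.toWord.take X.length = invRev X := by
      rw [eb, List.take_append_of_le_length (by simp [invRev_length])]
      simp [invRev_length]
    have t2 : b.toWord.take X.length = P'.take X.length := by
      rw [eb', List.take_append_of_le_length hXP]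
    rw [← t1, t2]
  set Smid := P'.drop X.length with hSmid
  have hP' : P' = invRev X ++ Smid := by
    rw [htake, hSmid, List.take_append_drop]
  have hSmid_len : Smid.length = P'.length - X.length := by simp [hSmid]
  have hSmid_ne : Smid ≠ [] := by
    have : 0 < Smid.length := by omega
    exact List.ne_nil_of_length_pos this
  have hS : S = Smid ++ Y := by
    have : invRev X ++ S = invRev X ++ (Smid ++ Y) := by
      rw [← eb, eb', hP']; simp
    exact List.append_cancel_left this
  -- reduce the triple product
  have hred : Red ((a * b).toWord ++ c.toWord) (P ++ (Smid ++ S')) := by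
    rw [eab, ec, hS]
    have he : (P ++ (Smid ++ Y)) ++ (invRev Y ++ S') =
        P ++ (Smid ++ ((Y ++ invRev Y) ++ S')) := by simp
    rw [he]
    have h2 : Red (P ++ (Smid ++ ((Y ++ invRev Y) ++ S')))
        (P ++ (Smid ++ (([] : List (β × Bool)) ++ S'))) :=
      Red.append_append Red.refl (Red.append_append Red.refl
        (Red.append_append (red_mul_invRev Y) Red.refl))
    simpa using h2
  have hchain : List.Chain' Rel (P ++ (Smid ++ S')) := by
    have hab : List.Chain' Rel (P ++ (Smid ++ Y)) := by
      rw [← hS, ← eab]; exact chain'_toWord _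
    have hPS : List.Chain' Rel (P ++ Smid) := by
      have : List.Chain' Rel ((P ++ Smid) ++ Y) := by simpa using hab
      exact this.left_of_append
    have hbc : List.Chain' Rel (P' ++ S') := by rw [← ebc]; exact chain'_toWord _
    have hjunc := (List.isChain_append.mp hbc).2.2
    have hS' : List.Chain' Rel S' := (List.isChain_append.mp hbc).2.1
    have : List.Chain' Rel ((P ++ Smid) ++ S') := by
      apply hPS.append hS'
      intro x hx y hy
      apply hjunc x ?_ y hy
      rw [List.getLast?_append_of_ne_nil _ hSmid_ne] at hx
      rw [hP', List.getLast?_append_of_ne_nil _ hSmid_ne]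
      exact hx
    simpa using this
  have habc : (a * b * c).toWord = P ++ (Smid ++ S') := by
    rw [toWord_mul' (a*b) c]
    rw [reduce.eq_of_red hred]
    exact reduce_eq_self_of_chain' hchain
  apply cancel_unique
  have h1 : norm (a * b * c) = P.length + Smid.length + S'.length := by
    rw [norm_def, habc]; simp; omega
  have h2 : norm (a * b) = P.length + S.length := by rw [norm_def, eab]; simp
  have h3 : norm c = Y.length + S'.length := by rw [norm_def, ec]; simp [invRev_length]
  have h4 : S.length = Smid.length + Y.length := by rw [hS]; simp
  omega

lemma cancel_mul_right {a b c : FreeGroup β} (h : cancel a b + cancel b c < norm b) :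
    cancel a (b * c) = cancel a b := by
  have h' : cancel c⁻¹ b⁻¹ + cancel b⁻¹ a⁻¹ < norm b⁻¹ := by
    rw [← cancel_inv_inv, ← cancel_inv_inv, norm_inv_eq]
    omega
  have key := cancel_mul_left h'
  have e1 : cancel a (b * c) = cancel (c⁻¹ * b⁻¹) a⁻¹ := by
    rw [cancel_inv_inv a (b * c), mul_inv_rev]
  rw [e1, key, ← cancel_inv_inv]

end RemnantProof

namespace RemnantProof

section Remnant

variable {α β : Type*} [Fintype α] [DecidableEq α] [DecidableEq β]
variable (η : FreeGroup α →* FreeGroup β)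

/-- The image word of a single letter. -/
def W (l : α × Bool) : FreeGroup β := bpow (η (FreeGroup.of l.1)) l.2

/-- Bound on cancellation on the left of the image of a letter. -/
def Lb (l : α × Bool) : ℕ := if l.2 then maxLeftCancel η l.1 else maxRightCancel η l.1

/-- Bound on cancellation on the right of the image of a letter. -/
def Rb (l : α × Bool) : ℕ := if l.2 then maxRightCancel η l.1 else maxLeftCancel η l.1

lemma bpow_inv (u : FreeGroup β) (e : Bool) : (bpow u e)⁻¹ = bpow u (!e) := by
  cases e <;> simp [bpow]

lemma norm_W (l : α × Bool) : FreeGroup.norm (W η l) = FreeGroup.norm (η (FreeGroup.of l.1)) := by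
  obtain ⟨i, e⟩ := l
  cases e <;> simp [W, bpow, FreeGroup.norm_inv_eq]

lemma F1 (hr : HasRemnant η) (l : α × Bool) : Lb η l + Rb η l < FreeGroup.norm (W η l) := by
  obtain ⟨i, e⟩ := l
  have := hr i
  cases e <;> simp [Lb, Rb, norm_W] <;> omega

lemma le_maxLeft {j : α} {e : Bool} {i : α} (h : (j, e) ≠ (i, false)) :
    cancel (bpow (η (FreeGroup.of j)) e) (η (FreeGroup.of i)) ≤ maxLeftCancel η i := by
  unfold maxLeftCancel
  exact Finset.le_sup (f := fun je : α × Bool => cancel (bpow (η (FreeGroup.of je.1)) je.2)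
    (η (FreeGroup.of i))) (b := (j, e)) (Finset.mem_filter.mpr ⟨Finset.mem_univ _, h⟩)

lemma le_maxRight {j : α} {e : Bool} {i : α} (h : (j, e) ≠ (i, false)) :
    cancel (η (FreeGroup.of i)) (bpow (η (FreeGroup.of j)) e) ≤ maxRightCancel η i := by
  unfold maxRightCancel
  exact Finset.le_sup (f := fun je : α × Bool => cancel (η (FreeGroup.of i))
    (bpow (η (FreeGroup.of je.1)) je.2)) (b := (j, e)) (Finset.mem_filter.mpr ⟨Finset.mem_univ _, h⟩)

lemma F2 {x y : α × Bool} (h : ¬(x.1 = y.1 ∧ x.2 = !y.2)) :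
    cancel (W η x) (W η y) ≤ Rb η x ∧ cancel (W η x) (W η y) ≤ Lb η y := by
  obtain ⟨i, e⟩ := x
  obtain ⟨j, f⟩ := y
  simp only [Prod.fst, Prod.snd] at h
  constructor
  · cases e with
    | true =>
      have hmem : (j, f) ≠ (i, false) := by
        rintro hh
        rw [Prod.mk.injEq] at hh
        exact h ⟨hh.1.symm, by simp [hh.2]⟩
      simpa [W, Rb, bpow] using le_maxRight η hmem
    | false =>
      have hmem : (j, !f) ≠ (i, false) := by
        rintro hh
        rw [Prod.mk.injEq] at hh
        exact h ⟨hh.1.symm, by cases f <;> simp_all⟩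
      have e1 : cancel (W η (i, false)) (W η (j, f)) =
          cancel (bpow (η (FreeGroup.of j)) (!f)) (η (FreeGroup.of i)) := by
        rw [cancel_inv_inv]
        simp only [W, bpow_inv]
        simp [bpow]
      rw [e1]
      simpa [Rb] using le_maxLeft η hmem
  · cases f with
    | true =>
      have hmem : (i, e) ≠ (j, false) := by
        rintro hh
        rw [Prod.mk.injEq] at hh
        exact h ⟨hh.1, by simp [hh.2]⟩
      simpa [W, Lb, bpow] using le_maxLeft η hmem
    | false =>
      have hmem : (i, !e) ≠ (j, false) := by
        rintro hh
        rw [Prod.mk.injEq] at hh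
        exact h ⟨hh.1, by cases e <;> simp_all⟩
      have e1 : cancel (W η (i, e)) (W η (j, false)) =
          cancel (η (FreeGroup.of j)) (bpow (η (FreeGroup.of i)) (!e)) := by
        rw [cancel_inv_inv]
        simp only [W, bpow_inv]
        simp [bpow]
      rw [e1]
      simpa [Lb] using le_maxRight η hmem

lemma eta_mk_singleton (l : α × Bool) : η (FreeGroup.mk [l]) = W η l := by
  obtain ⟨i, e⟩ := l
  cases e with
  | true =>
    have : FreeGroup.mk [(i, true)] = FreeGroup.of i := by
      rw [← FreeGroup.toWord_of i, FreeGroup.mk_toWord]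
    rw [this]; rfl
  | false =>
    have h1 : FreeGroup.mk [(i, false)] = (FreeGroup.of i)⁻¹ := by
      have : FreeGroup.mk [(i, true)] = FreeGroup.of i := by
        rw [← FreeGroup.toWord_of i, FreeGroup.mk_toWord]
      rw [← this, FreeGroup.inv_mk, invRev_singleton]
      rfl
    rw [h1, _root_.map_inv]
    simp [W, bpow]

lemma eta_mk_cons (x : α × Bool) (L : List (α × Bool)) :
    η (FreeGroup.mk (x :: L)) = W η x * η (FreeGroup.mk L) := by
  have h : FreeGroup.mk (x :: L) = FreeGroup.mk [x] * FreeGroup.mk L := by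
    rw [FreeGroup.mul_mk]
    rfl
  rw [h, _root_.map_mul, eta_mk_singleton]

lemma main (hr : HasRemnant η) :
    ∀ (L : List (α × Bool)) (x : α × Bool), List.Chain' Rel (x :: L) →
      (∀ u, cancel u (W η x) ≤ Lb η x →
          cancel u (η (FreeGroup.mk (x :: L))) = cancel u (W η x)) ∧
      (∀ v, cancel (W η ((x :: L).getLast (List.cons_ne_nil x L))) v ≤
            Rb η ((x :: L).getLast (List.cons_ne_nil x L)) →
          cancel (η (FreeGroup.mk (x :: L))) v =
            cancel (W η ((x :: L).getLast (List.cons_ne_nil x L))) v) ∧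
      Lb η x + Rb η ((x :: L).getLast (List.cons_ne_nil x L)) <
        FreeGroup.norm (η (FreeGroup.mk (x :: L))) := by
  intro L
  induction L with
  | nil =>
    intro x _
    have hval : η (FreeGroup.mk [x]) = W η x := eta_mk_singleton η x
    refine ⟨fun u _ => by rw [hval], fun v _ => ?_, ?_⟩
    · simp only [List.getLast_singleton, hval]
    · simp only [List.getLast_singleton, hval]
      exact F1 η hr x
  | cons y L' ih =>
    intro x hch
    have hch' : List.Chain' Rel (y :: L') := hch.tail
    have hadm : ¬(x.1 = y.1 ∧ x.2 = !y.2) := (List.isChain_cons_cons.mp hch).1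
    obtain ⟨ih1, ih2, ih3⟩ := ih y hch'
    set lst := ((y :: L').getLast (List.cons_ne_nil y L')) with hlst
    have hlast : ((x :: y :: L').getLast (List.cons_ne_nil x (y :: L'))) = lst := by
      rw [List.getLast_cons (List.cons_ne_nil y L')]
    set M := η (FreeGroup.mk (y :: L')) with hM
    have hval : η (FreeGroup.mk (x :: y :: L')) = W η x * M := eta_mk_cons η x (y :: L')
    obtain ⟨hF2r, hF2l⟩ := F2 η hadm
    have hc0 : cancel (W η x) M = cancel (W η x) (W η y) := ih1 (W η x) hF2l
    have hF1x := F1 η hr x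
    have hF1y := F1 η hr y
    have hnormM := norm_mul_cancel (W η x) M
    refine ⟨?_, ?_, ?_⟩
    · intro u hu
      rw [hval]
      have : cancel u (W η x) + cancel (W η x) M < FreeGroup.norm (W η x) := by omega
      exact cancel_mul_right this
    · intro v hv
      rw [hlast] at hv ⊢
      rw [hval]
      have hMv : cancel M v = cancel (W η lst) v := ih2 v hv
      have : cancel (W η x) M + cancel M v < FreeGroup.norm M := by omega
      rw [cancel_mul_left this, hMv]
    · rw [hlast, hval]
      omega

/-- A homomorphism with remnant has trivial kernel. -/
lemma eq_one_of_remnant (hr : HasRemnant η) {w : FreeGroup α} (hw : η w = 1) : w = 1 := by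
  by_contra hne
  have hL : w.toWord ≠ [] := fun hh => hne (FreeGroup.toWord_eq_nil_iff.mp hh)
  obtain ⟨x, L, hxl⟩ : ∃ x L, w.toWord = x :: L := by
    cases hww : w.toWord with
    | nil => exact absurd hww hL
    | cons x L => exact ⟨x, L, rfl⟩
  have hch : List.Chain' Rel (x :: L) := by
    rw [← hxl, ← FreeGroup.reduce_toWord]
    exact chain'_reduce _
  have h3 := (main η hr L x hch).2.2
  have hmk : FreeGroup.mk (x :: L) = w := by rw [← hxl, FreeGroup.mk_toWord]
  rw [hmk, hw] at h3
  simp at h3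

end Remnant

end RemnantProof

/-- If `φ ∗ ψ : G ∗ G → H` has remnant, then `φ(G) ∩ ψ(G) = {1}`. -/
theorem range_inter_range_eq_bot_of_hasRemnant {n : ℕ} {β : Type*} [DecidableEq β]
    (φ ψ : FreeGroup (Fin n) →* FreeGroup β)
    (h : HasRemnant (prodHom φ ψ)) :
    φ.range ⊓ ψ.range = ⊥ := by
  rw [Subgroup.eq_bot_iff_forall]
  intro x hx
  rw [Subgroup.mem_inf] at hx
  obtain ⟨⟨a, ha⟩, ⟨b, hb⟩⟩ := hx
  -- the embeddings of the two factors and the compatibilities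
  set ml : FreeGroup (Fin n) →* FreeGroup (Fin n ⊕ Fin n) := FreeGroup.map Sum.inl with hml
  set mr : FreeGroup (Fin n) →* FreeGroup (Fin n ⊕ Fin n) := FreeGroup.map Sum.inr with hmr
  have hcompl : (prodHom φ ψ).comp ml = φ := by
    apply FreeGroup.ext_hom
    intro i
    simp [hml, prodHom, FreeGroup.map.of, FreeGroup.lift_apply_of]
  have hcompr : (prodHom φ ψ).comp mr = ψ := by
    apply FreeGroup.ext_hom
    intro i
    simp [hmr, prodHom, FreeGroup.map.of, FreeGroup.lift_apply_of]
  have hw : prodHom φ ψ (ml a * (mr b)⁻¹) = 1 := by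
    rw [_root_.map_mul, _root_.map_inv]
    have e1 : prodHom φ ψ (ml a) = φ a := DFunLike.congr_fun hcompl a
    have e2 : prodHom φ ψ (mr b) = ψ b := DFunLike.congr_fun hcompr b
    rw [e1, e2, ha, hb, mul_inv_cancel]
  have hone := RemnantProof.eq_one_of_remnant (prodHom φ ψ) h hw
  have heq : ml a = mr b := by
    rw [mul_inv_eq_one] at hone
    exact hone
  -- project to the first factor to conclude a = 1
  set π : FreeGroup (Fin n ⊕ Fin n) →* FreeGroup (Fin n) :=
    FreeGroup.lift (Sum.elim FreeGroup.of (fun _ => 1)) with hπ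
  have hπl : π.comp ml = MonoidHom.id _ := by
    apply FreeGroup.ext_hom
    intro i
    simp [hπ, hml, FreeGroup.map.of, FreeGroup.lift_apply_of]
  have hπr : π.comp mr = 1 := by
    apply FreeGroup.ext_hom
    intro i
    simp [hπ, hmr, FreeGroup.map.of, FreeGroup.lift_apply_of]
  have ha1 : a = 1 := by
    have h1 : π (ml a) = a := DFunLike.congr_fun hπl a
    have h2 : π (mr b) = 1 := by
      have := DFunLike.congr_fun hπr b
      simpa using this
    rw [← h1, heq, h2]
  rw [← ha, ha1, _root_.map_one]
end

section
/- Let G be a free group with basis g₁, …, g_n, let H be a free group, let φ, ψ : G → H be homomorphisms, and let u, v ∈ H. Let Ĝ = G ∗ ⟨z⟩ and Ĥ = H ∗ ⟨z⟩, let φ̂_u : Ĝ → Ĥ extend φ with φ̂_u(z) = u z u⁻¹, let ψ̂ : Ĝ → Ĥ extend ψ with ψ̂(z) = z, and let φ̂_u^v(x) = v⁻¹ φ̂_u(x) v. If the homomorphism φ̂_u^v ∗ ψ̂ : Ĝ ∗ Ĝ → Ĥ has remnant, then u and v are in different doubly-twisted conjugacy classes, i.e., there is no g ∈ G with v = φ(g)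 u ψ(g)⁻¹. -/
/-! Basic definitions: cancellation in products of reduced words, remnant
of a homomorphism of free groups, and assorted constructions. -/

open FreeGroup

/-- The canonical embedding of the free group `H` on `β` into `H ∗ ⟨z⟩`, the free group
on `β ⊕ Unit`. -/
def iotaZ {β : Type*} : FreeGroup β →* FreeGroup (β ⊕ Unit) :=
  FreeGroup.lift fun b => FreeGroup.of (Sum.inl b)

/-- The generator `z` of the infinite cyclic free factor of `H ∗ ⟨z⟩`, the free group
on `β ⊕ Unit`. -/
def zGen (β : Type*) : FreeGroup (β ⊕ Unit) := FreeGroup.of (Sum.inr ())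

/-- The extension `φ̂ᵤ : G ∗ ⟨z⟩ → H ∗ ⟨z⟩` of `φ : G → H` with `φ̂ᵤ(z) = u z u⁻¹`,
for free groups `G` (on `α`) and `H` (on `β`). -/
def hatPhiF {α β : Type*} (φ : FreeGroup α →* FreeGroup β) (u : FreeGroup β) :
    FreeGroup (α ⊕ Unit) →* FreeGroup (β ⊕ Unit) :=
  FreeGroup.lift (Sum.elim (fun i => iotaZ (φ (FreeGroup.of i)))
    (fun _ => iotaZ u * zGen β * (iotaZ u)⁻¹))

/-- The extension `ψ̂ : G ∗ ⟨z⟩ → H ∗ ⟨z⟩` of `ψ : G → H` with `ψ̂(z) = z`. -/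
def hatPsiF {α β : Type*} (ψ : FreeGroup α →* FreeGroup β) :
    FreeGroup (α ⊕ Unit) →* FreeGroup (β ⊕ Unit) :=
  FreeGroup.lift (Sum.elim (fun i => iotaZ (ψ (FreeGroup.of i))) (fun _ => zGen β))


/-! ### Auxiliary development: remnant implies injectivity (Wagner) -/

section Aux

open List

set_option linter.unusedSectionVars false

variable {β : Type*} [DecidableEq β]

/-- adjacent letters do not cancel -/
def NC (a b : β × Bool) : Prop := ¬(a.1 = b.1 ∧ a.2 = !b.2)

theorem chain'_reduce (L : List (β × Bool)) : List.Chain' NC (reduce L) := by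
  induction L with
  | nil => simp [FreeGroup.reduce, List.Chain']
  | cons x L ih =>
    rw [reduce.cons]
    rcases h : FreeGroup.reduce L with _ | ⟨hd, tl⟩
    · simp [List.Chain']
    · rw [h] at ih
      by_cases hc : x.1 = hd.1 ∧ x.2 = !hd.2
      · simpa [hc, List.Chain'] using ih.tail
      · simpa [hc, List.Chain', List.isChain_cons_cons] using (⟨hc, ih⟩ : NC x hd ∧ List.Chain' NC (hd :: tl))

theorem reduce_eq_self_of_chain' {L : List (β × Bool)} (h : List.Chain' NC L) :
    FreeGroup.reduce L = L := by
  induction L with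
  | nil => rfl
  | cons x L ih =>
    rw [reduce.cons, ih h.tail]
    rcases L with _ | ⟨hd, tl⟩
    · rfl
    · have : ¬(x.1 = hd.1 ∧ x.2 = !hd.2) := (List.isChain_cons_cons.1 h).1
      simp [this]

theorem chain'_toWord (x : FreeGroup β) : List.Chain' NC x.toWord := by
  rw [← FreeGroup.reduce_toWord]; exact chain'_reduce _

theorem red_invRev_append (Q : List (β × Bool)) : FreeGroup.Red (invRev Q ++ Q) [] := by
  have h1 : FreeGroup.mk (invRev Q ++ Q) = FreeGroup.mk [] := by
    rw [← FreeGroup.one_eq_mk, ← FreeGroup.mul_mk, ← FreeGroup.inv_mk, inv_mul_cancel]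
  have h2 := FreeGroup.Red.exact.1 h1
  obtain ⟨L, hL1, hL2⟩ := h2
  rwa [FreeGroup.Red.nil_iff.1 hL2] at hL1

set_option linter.unusedSectionVars false

theorem reduce_PQR {P R : List (β × Bool)} (Q : List (β × Bool))
    (hP : List.Chain' NC P) (hR : List.Chain' NC R)
    (hj : ∀ p ∈ P.getLast?, ∀ r ∈ R.head?, NC p r) :
    FreeGroup.reduce (P ++ invRev Q ++ (Q ++ R)) = P ++ R := by
  have hred : FreeGroup.Red (P ++ invRev Q ++ (Q ++ R)) (P ++ R) := by
    have : P ++ invRev Q ++ (Q ++ R) = P ++ ((invRev Q ++ Q) ++ R) := by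
      simp [List.append_assoc]
    rw [this]
    have h2 : FreeGroup.Red ((invRev Q ++ Q) ++ R) ([] ++ R) :=
      FreeGroup.Red.append_append (red_invRev_append Q) FreeGroup.Red.refl
    simpa using FreeGroup.Red.append_append (FreeGroup.Red.refl (L := P)) h2
  rw [FreeGroup.reduce.eq_of_red hred]
  exact reduce_eq_self_of_chain' (List.isChain_append.2 ⟨hP, hR, hj⟩)

theorem decomp_exists (A B : List (β × Bool)) :
    ∃ P Q R, A = P ++ invRev Q ∧ B = Q ++ R ∧
      (∀ p ∈ P.getLast?, ∀ r ∈ R.head?, NC p r) := by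
  induction B generalizing A with
  | nil =>
    exact ⟨A, [], [], by simp [FreeGroup.invRev], by simp, by simp⟩
  | cons b B' ih =>
    rcases A.eq_nil_or_concat with rfl | ⟨A', a, rfl⟩
    · exact ⟨[], [], b :: B', by simp [FreeGroup.invRev], by simp, by simp⟩
    · by_cases hc : NC a b
      · refine ⟨A' ++ [a], [], b :: B', by simp [FreeGroup.invRev], by simp, ?_⟩
        simp [hc]
      · obtain ⟨P, Q, R, h1, h2, h3⟩ := ih A'
        refine ⟨P, b :: Q, R, ?_, by simp [h2], h3⟩
        have ha : a = (b.1, !b.2) := by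
          simp only [NC, not_not] at hc
          exact Prod.ext hc.1 hc.2
        rw [h1]
        simp [FreeGroup.invRev, ha]



theorem norm_eq_toWord_length (x : FreeGroup β) : FreeGroup.norm x = x.toWord.length := rfl

theorem toWord_mul_decomp {P Q R : List (β × Bool)} {a b : FreeGroup β}
    (hA : a.toWord = P ++ invRev Q) (hB : b.toWord = Q ++ R)
    (hj : ∀ p ∈ P.getLast?, ∀ r ∈ R.head?, NC p r) :
    (a * b).toWord = P ++ R ∧ cancel a b = Q.length := by
  have hP : List.Chain' NC P := (chain'_toWord a).prefix ⟨invRev Q, hA.symm⟩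
  have hR : List.Chain' NC R := (chain'_toWord b).suffix ⟨Q, hB.symm⟩
  have hmul : (a * b).toWord = P ++ R := by
    conv_lhs => rw [← FreeGroup.mk_toWord (x := a), ← FreeGroup.mk_toWord (x := b)]
    rw [FreeGroup.mul_mk, FreeGroup.toWord_mk, hA, hB, reduce_PQR Q hP hR hj]
  refine ⟨hmul, ?_⟩
  have h1 : FreeGroup.norm a = P.length + Q.length := by
    rw [norm_eq_toWord_length, hA]; simp [FreeGroup.invRev]
  have h2 : FreeGroup.norm b = Q.length + R.length := by
    rw [norm_eq_toWord_length, hB]; simp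
  have h3 : FreeGroup.norm (a * b) = P.length + R.length := by
    rw [norm_eq_toWord_length, hmul]; simp
  rw [cancel, h1, h2, h3]
  omega




theorem norm_bpow (w : FreeGroup β) (e : Bool) : FreeGroup.norm (bpow w e) = FreeGroup.norm w := by
  cases e <;> simp [bpow, FreeGroup.norm_inv_eq]

theorem bpow_inv (w : FreeGroup β) (e : Bool) : (bpow w e)⁻¹ = bpow w (!e) := by
  cases e <;> simp [bpow]

theorem cancel_inv (a b : FreeGroup β) : cancel a b = cancel b⁻¹ a⁻¹ := by
  unfold cancel
  rw [FreeGroup.norm_inv_eq, FreeGroup.norm_inv_eq, ← mul_inv_rev, FreeGroup.norm_inv_eq,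
    Nat.add_comm]

section Eta
variable {α : Type*} [Fintype α] [DecidableEq α] (η : FreeGroup α →* FreeGroup β)

def tLet (s : α × Bool) : FreeGroup β := bpow (η (FreeGroup.of s.1)) s.2

def mLC (s : α × Bool) : ℕ := cond s.2 (maxLeftCancel η s.1) (maxRightCancel η s.1)

def mRC (s : α × Bool) : ℕ := cond s.2 (maxRightCancel η s.1) (maxLeftCancel η s.1)

theorem remnant_bound (h : HasRemnant η) (s : α × Bool) :
    mLC η s + mRC η s < FreeGroup.norm (tLet η s) := by
  rcases s with ⟨i, e⟩
  have := h i
  cases e <;> simp [mLC, mRC, tLet, norm_bpow] <;> omega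

theorem cancel_le_mLC {s s' : α × Bool} (h : NC s s') :
    cancel (tLet η s) (tLet η s') ≤ mLC η s' := by
  rcases s with ⟨i, e⟩; rcases s' with ⟨i', e'⟩
  simp only [NC, not_and] at h
  simp only [tLet, mLC]
  cases e' with
  | true =>
    have hmem : (i, e) ∈ Finset.univ.filter fun je : α × Bool => je ≠ (i', false) := by
      simp only [Finset.mem_filter, Finset.mem_univ, true_and, ne_eq, Prod.mk.injEq, not_and]
      intro h1 h2
      exact h h1 (by simp [h2])
    have hle := Finset.le_sup (f := fun je : α × Bool =>
      cancel (bpow (η (FreeGroup.of je.1)) je.2) (η (FreeGroup.of i'))) hmem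
    simpa [bpow, maxLeftCancel] using hle
  | false =>
    have hstep : cancel (bpow (η (FreeGroup.of i)) e) (bpow (η (FreeGroup.of i')) false)
        = cancel (η (FreeGroup.of i')) (bpow (η (FreeGroup.of i)) (!e)) := by
      rw [show bpow (η (FreeGroup.of i')) false = (η (FreeGroup.of i'))⁻¹ from rfl,
        cancel_inv, inv_inv, bpow_inv]
    rw [hstep]
    have hmem : (i, !e) ∈ Finset.univ.filter fun je : α × Bool => je ≠ (i', false) := by
      simp only [Finset.mem_filter, Finset.mem_univ, true_and, ne_eq, Prod.mk.injEq, not_and]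
      intro h1 h2
      apply h h1
      cases e <;> simp_all
    have hle := Finset.le_sup (f := fun je : α × Bool =>
      cancel (η (FreeGroup.of i')) (bpow (η (FreeGroup.of je.1)) je.2)) hmem
    simpa [maxRightCancel] using hle

theorem cancel_le_mRC {s s' : α × Bool} (h : NC s s') :
    cancel (tLet η s) (tLet η s') ≤ mRC η s := by
  rcases s with ⟨i, e⟩; rcases s' with ⟨i', e'⟩
  simp only [NC, not_and] at h
  simp only [tLet, mRC]
  cases e with
  | true =>
    have hmem : (i', e') ∈ Finset.univ.filter fun je : α × Bool => je ≠ (i, false) := by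
      simp only [Finset.mem_filter, Finset.mem_univ, true_and, ne_eq, Prod.mk.injEq, not_and]
      intro h1 h2
      exact h h1.symm (by simp [h2])
    have hle := Finset.le_sup (f := fun je : α × Bool =>
      cancel (η (FreeGroup.of i)) (bpow (η (FreeGroup.of je.1)) je.2)) hmem
    simpa [bpow, maxRightCancel] using hle
  | false =>
    have hstep : cancel (bpow (η (FreeGroup.of i)) false) (bpow (η (FreeGroup.of i')) e')
        = cancel (bpow (η (FreeGroup.of i')) (!e')) (η (FreeGroup.of i)) := by
      rw [show bpow (η (FreeGroup.of i)) false = (η (FreeGroup.of i))⁻¹ from rfl,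
        cancel_inv, inv_inv, bpow_inv]
    rw [hstep]
    have hmem : (i', !e') ∈ Finset.univ.filter fun je : α × Bool => je ≠ (i, false) := by
      simp only [Finset.mem_filter, Finset.mem_univ, true_and, ne_eq, Prod.mk.injEq, not_and]
      intro h1 h2
      apply h h1.symm
      cases e' <;> simp_all
    have hle := Finset.le_sup (f := fun je : α × Bool =>
      cancel (bpow (η (FreeGroup.of je.1)) je.2) (η (FreeGroup.of i))) hmem
    simpa [maxLeftCancel] using hle

end Eta

section Main
variable {α : Type*} [Fintype α] [DecidableEq α] (η : FreeGroup α →* FreeGroup β)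

theorem eta_mk_singleton (s : α × Bool) : η (FreeGroup.mk [s]) = tLet η s := by
  rcases s with ⟨i, e⟩
  cases e
  · have h1 : FreeGroup.mk [(i, false)] = (FreeGroup.of i)⁻¹ := by
      rw [show FreeGroup.of i = FreeGroup.mk [(i, true)] from rfl, FreeGroup.inv_mk]
      rfl
    rw [h1, MonoidHom.map_inv]; rfl
  · rw [show FreeGroup.mk [(i, true)] = FreeGroup.of i from rfl]; rfl

theorem main_induction (hrem : HasRemnant η) :
    ∀ L : List (α × Bool), List.Chain' NC L → ∀ s, L.getLast? = some s →
      ∃ U d, d ≤ mLC η s ∧ (η (FreeGroup.mk L)).toWord = U ++ (tLet η s).toWord.drop d := by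
  intro L
  induction L using List.reverseRecOn with
  | nil => intro _ s hs; simp at hs
  | append_singleton L' a ih =>
    intro hch s hs
    rw [List.getLast?_concat] at hs
    obtain rfl : a = s := by injection hs
    rcases L'.eq_nil_or_concat with rfl | ⟨L'', s', hL'⟩
    · refine ⟨[], 0, Nat.zero_le _, ?_⟩
      simp only [List.nil_append]
      rw [eta_mk_singleton]
      simp
    · rw [List.concat_eq_append] at hL'
      subst hL'
      have hL'ne : L'' ++ [s'] ≠ [] := by simp
      have hchL' : List.Chain' NC (L'' ++ [s']) := hch.prefix ⟨[a], rfl⟩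
      have hjun : NC s' a := by
        have := List.isChain_append.1 hch
        exact this.2.2 s' (by simp) a rfl
      obtain ⟨U', d', hd', hW'⟩ := ih hchL' s' (by simp)
      obtain ⟨P, Q, R, hA, hB, hj⟩ := decomp_exists (tLet η s').toWord (tLet η a).toWord
      have hcan : cancel (tLet η s') (tLet η a) = Q.length :=
        (toWord_mul_decomp (a := tLet η s') (b := tLet η a) hA hB hj).2
      have hq1 : Q.length ≤ mLC η a := hcan ▸ cancel_le_mLC η hjun
      have hq2 : Q.length ≤ mRC η s' := hcan ▸ cancel_le_mRC η hjun
      have hrem' := remnant_bound η hrem s'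
      have hlenA : (tLet η s').toWord.length = P.length + Q.length := by
        rw [hA]; simp [FreeGroup.invRev]
      have hd'P : d' ≤ P.length := by
        rw [norm_eq_toWord_length] at hrem'
        omega
      have hd'Plt : d' < P.length := by
        rw [norm_eq_toWord_length] at hrem'
        omega
      have hW'decomp : (η (FreeGroup.mk (L'' ++ [s']))).toWord
          = (U' ++ P.drop d') ++ invRev Q := by
        rw [hW', hA, List.drop_append_of_le_length hd'P, List.append_assoc]
      have hjbig : ∀ p ∈ (U' ++ P.drop d').getLast?, ∀ r ∈ R.head?, NC p r := by
        intro p hp r hr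
        have hPd : P.drop d' ≠ [] := by
          intro hnil
          have h5 := List.length_drop (i := d') (l := P)
          rw [hnil] at h5
          simp at h5
          omega
        rw [List.getLast?_append_of_ne_nil _ hPd] at hp
        have h6 : (P.drop d').getLast? = P.getLast? := by
          conv_rhs => rw [← List.take_append_drop d' P]
          rw [List.getLast?_append_of_ne_nil _ hPd]
        rw [h6] at hp
        exact hj p hp r hr
      have hmain := toWord_mul_decomp (a := η (FreeGroup.mk (L'' ++ [s']))) (b := tLet η a)
        hW'decomp hB hjbig
      refine ⟨U' ++ P.drop d', Q.length, hq1, ?_⟩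
      have hmm : FreeGroup.mk (L'' ++ [s'] ++ [a])
          = FreeGroup.mk (L'' ++ [s']) * FreeGroup.mk [a] := by
        rw [FreeGroup.mul_mk]
      rw [hmm, MonoidHom.map_mul, eta_mk_singleton, hmain.1, hB, List.drop_left]

theorem eta_ne_one (hrem : HasRemnant η) {x : FreeGroup α} (hx : x ≠ 1) : η x ≠ 1 := by
  have hL : x.toWord ≠ [] := fun h => hx (FreeGroup.toWord_eq_nil_iff.1 h)
  obtain ⟨s, hs⟩ : ∃ s, x.toWord.getLast? = some s := by
    rcases h : x.toWord.getLast? with _ | s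
    · exact absurd (List.getLast?_eq_none_iff.1 h) hL
    · exact ⟨s, rfl⟩
  obtain ⟨U, d, hd, hW⟩ := main_induction η hrem x.toWord (chain'_toWord x) s hs
  rw [FreeGroup.mk_toWord] at hW
  intro h1
  rw [h1, FreeGroup.toWord_one] at hW
  have h2 : (tLet η s).toWord.drop d = [] := (List.append_eq_nil_iff.mp hW.symm).2
  have h3 : (tLet η s).toWord.length ≤ d := by
    have h5 := List.length_drop (i := d) (l := (tLet η s).toWord)
    rw [h2] at h5
    simp at h5
    omega
  have h4 := remnant_bound η hrem s
  rw [norm_eq_toWord_length] at h4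
  omega

end Main







section App
variable {α' : Type*} {β' : Type*}

theorem hatPhiF_iotaZ (φ : FreeGroup α' →* FreeGroup β') (u : FreeGroup β') (x : FreeGroup α') :
    hatPhiF φ u (iotaZ x) = iotaZ (φ x) := by
  have : (hatPhiF φ u).comp iotaZ = iotaZ.comp φ := by
    apply FreeGroup.ext_hom
    intro a
    simp [hatPhiF, iotaZ, FreeGroup.lift_apply_of]
  exact DFunLike.congr_fun this x

theorem hatPsiF_iotaZ (ψ : FreeGroup α' →* FreeGroup β') (x : FreeGroup α') :
    hatPsiF ψ (iotaZ x) = iotaZ (ψ x) := by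
  have : (hatPsiF ψ).comp iotaZ = iotaZ.comp ψ := by
    apply FreeGroup.ext_hom
    intro a
    simp [hatPsiF, iotaZ, FreeGroup.lift_apply_of]
  exact DFunLike.congr_fun this x

theorem hatPhiF_z (φ : FreeGroup α' →* FreeGroup β') (u : FreeGroup β') :
    hatPhiF φ u (zGen α') = iotaZ u * zGen β' * (iotaZ u)⁻¹ := by
  simp [hatPhiF, zGen, FreeGroup.lift_apply_of]

theorem hatPsiF_z (ψ : FreeGroup α' →* FreeGroup β') :
    hatPsiF ψ (zGen α') = zGen β' := by
  simp [hatPsiF, zGen, FreeGroup.lift_apply_of]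

theorem prodHom_inl (φ ψ : FreeGroup α' →* FreeGroup β') (x : FreeGroup α') :
    prodHom φ ψ (FreeGroup.map Sum.inl x) = φ x := by
  have : (prodHom φ ψ).comp (FreeGroup.map Sum.inl) = φ := by
    apply FreeGroup.ext_hom
    intro a
    simp [prodHom, FreeGroup.map.of, FreeGroup.lift_apply_of]
  exact DFunLike.congr_fun this x

theorem prodHom_inr (φ ψ : FreeGroup α' →* FreeGroup β') (x : FreeGroup α') :
    prodHom φ ψ (FreeGroup.map Sum.inr x) = ψ x := by
  have : (prodHom φ ψ).comp (FreeGroup.map Sum.inr) = ψ := by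
    apply FreeGroup.ext_hom
    intro a
    simp [prodHom, FreeGroup.map.of, FreeGroup.lift_apply_of]
  exact DFunLike.congr_fun this x

end App

theorem classes_distinct_of_hat_hasRemnant' {n : ℕ} {β : Type*} [DecidableEq β]
    (φ ψ : FreeGroup (Fin n) →* FreeGroup β) (u v : FreeGroup β)
    (h : HasRemnant (prodHom (conjHom (hatPhiF φ u) (iotaZ v)) (hatPsiF ψ))) :
    ¬ ∃ g : FreeGroup (Fin n), v = φ g * u * (ψ g)⁻¹ := by
  rintro ⟨g, hg⟩
  set φ' := conjHom (hatPhiF φ u) (iotaZ v) with hφ'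
  set ψ' := hatPsiF ψ with hψ'
  set w : FreeGroup (Fin n ⊕ Unit) := iotaZ g * zGen (Fin n) * (iotaZ g)⁻¹ with hw
  -- φ' w = ψ' w
  have key : φ' w = ψ' w := by
    have hrel : (iotaZ v)⁻¹ * iotaZ (φ g) * iotaZ u
        = (iotaZ (ψ g) : FreeGroup (β ⊕ Unit)) := by
      rw [← MonoidHom.map_inv, ← MonoidHom.map_mul, ← MonoidHom.map_mul]
      congr 1
      rw [hg]
      group
    have hconj : φ' w = (iotaZ v)⁻¹ * hatPhiF φ u w * iotaZ v := by
      simp [hφ', conjHom, MulAut.conj_apply]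
    have hPhiw : hatPhiF φ u w = iotaZ (φ g) * (iotaZ u * zGen β * (iotaZ u)⁻¹)
        * (iotaZ (φ g))⁻¹ := by
      rw [hw, MonoidHom.map_mul, MonoidHom.map_mul, MonoidHom.map_inv, hatPhiF_iotaZ, hatPhiF_z]
    have h2 : ψ' w = iotaZ (ψ g) * zGen β * (iotaZ (ψ g))⁻¹ := by
      rw [hψ', hw, MonoidHom.map_mul, MonoidHom.map_mul, MonoidHom.map_inv, hatPsiF_iotaZ,
        hatPsiF_z]
    rw [hconj, hPhiw, h2, ← hrel]
    group
  -- the nontrivial equalizer element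
  have hwne : w ≠ 1 := by
    intro h1
    have h4 : zGen (Fin n) = 1 := by
      have h3 := congrArg (fun x => (iotaZ g)⁻¹ * x * iotaZ g) h1
      simp only [hw] at h3
      rw [show (iotaZ g)⁻¹ * (iotaZ g * zGen (Fin n) * (iotaZ g)⁻¹) * iotaZ g
        = zGen (Fin n) by group] at h3
      simpa using h3
    exact FreeGroup.of_ne_one _ h4
  set W : FreeGroup ((Fin n ⊕ Unit) ⊕ (Fin n ⊕ Unit)) :=
    FreeGroup.map Sum.inl w * (FreeGroup.map Sum.inr w)⁻¹ with hW
  have hWne : W ≠ 1 := by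
    intro h1
    set r : FreeGroup ((Fin n ⊕ Unit) ⊕ (Fin n ⊕ Unit)) →* FreeGroup (Fin n ⊕ Unit) :=
      FreeGroup.lift (Sum.elim FreeGroup.of fun _ => 1) with hrdef
    have hleft : r.comp (FreeGroup.map Sum.inl) = MonoidHom.id _ := by
      apply FreeGroup.ext_hom
      intro a
      simp [hrdef, FreeGroup.map.of, FreeGroup.lift_apply_of]
    have hright : r.comp (FreeGroup.map Sum.inr) = 1 := by
      apply FreeGroup.ext_hom
      intro a
      simp [hrdef, FreeGroup.map.of, FreeGroup.lift_apply_of]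
    have hr : r W = w := by
      rw [hW, MonoidHom.map_mul, MonoidHom.map_inv]
      have e1 : r (FreeGroup.map Sum.inl w) = w := DFunLike.congr_fun hleft w
      have e2 : r (FreeGroup.map Sum.inr w) = 1 := by
        simpa using DFunLike.congr_fun hright w
      rw [e1, e2]
      simp
    rw [h1] at hr
    simp at hr
    exact hwne hr.symm
  have hW1 : prodHom φ' ψ' W = 1 := by
    rw [hW, MonoidHom.map_mul, MonoidHom.map_inv, prodHom_inl, prodHom_inr, key]
    simp
  exact eta_ne_one _ h hWne hW1

end Aux

/-- If `φ̂ᵤᵛ ∗ ψ̂ : Ĝ ∗ Ĝ → Ĥ` has remnant, then `u` and `v` lie in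
different doubly-twisted conjugacy classes. -/
theorem classes_distinct_of_hat_hasRemnant {n : ℕ} {β : Type*} [DecidableEq β]
    (φ ψ : FreeGroup (Fin n) →* FreeGroup β) (u v : FreeGroup β)
    (h : HasRemnant (prodHom (conjHom (hatPhiF φ u) (iotaZ v)) (hatPsiF ψ))) :
    ¬ ∃ g : FreeGroup (Fin n), v = φ g * u * (ψ g)⁻¹ := by
  rintro ⟨g, hg⟩
  set φ' := conjHom (hatPhiF φ u) (iotaZ v) with hφ'
  set ψ' := hatPsiF ψ with hψ'
  set w : FreeGroup (Fin n ⊕ Unit) := iotaZ g * zGen (Fin n) * (iotaZ g)⁻¹ with hw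
  -- φ' w = ψ' w
  have key : φ' w = ψ' w := by
    have hrel : (iotaZ v)⁻¹ * iotaZ (φ g) * iotaZ u
        = (iotaZ (ψ g) : FreeGroup (β ⊕ Unit)) := by
      rw [← MonoidHom.map_inv, ← MonoidHom.map_mul, ← MonoidHom.map_mul]
      congr 1
      rw [hg]
      group
    have hconj : φ' w = (iotaZ v)⁻¹ * hatPhiF φ u w * iotaZ v := by
      simp [hφ', conjHom, MulAut.conj_apply]
    have hPhiw : hatPhiF φ u w = iotaZ (φ g) * (iotaZ u * zGen β * (iotaZ u)⁻¹)
        * (iotaZ (φ g))⁻¹ := by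
      rw [hw, MonoidHom.map_mul, MonoidHom.map_mul, MonoidHom.map_inv, hatPhiF_iotaZ, hatPhiF_z]
    have h2 : ψ' w = iotaZ (ψ g) * zGen β * (iotaZ (ψ g))⁻¹ := by
      rw [hψ', hw, MonoidHom.map_mul, MonoidHom.map_mul, MonoidHom.map_inv, hatPsiF_iotaZ,
        hatPsiF_z]
    rw [hconj, hPhiw, h2, ← hrel]
    group
  -- the nontrivial equalizer element
  have hwne : w ≠ 1 := by
    intro h1
    have h4 : zGen (Fin n) = 1 := by
      have h3 := congrArg (fun x => (iotaZ g)⁻¹ * x * iotaZ g) h1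
      simp only [hw] at h3
      rw [show (iotaZ g)⁻¹ * (iotaZ g * zGen (Fin n) * (iotaZ g)⁻¹) * iotaZ g
        = zGen (Fin n) by group] at h3
      simpa using h3
    exact FreeGroup.of_ne_one _ h4
  set W : FreeGroup ((Fin n ⊕ Unit) ⊕ (Fin n ⊕ Unit)) :=
    FreeGroup.map Sum.inl w * (FreeGroup.map Sum.inr w)⁻¹ with hW
  have hWne : W ≠ 1 := by
    intro h1
    set r : FreeGroup ((Fin n ⊕ Unit) ⊕ (Fin n ⊕ Unit)) →* FreeGroup (Fin n ⊕ Unit) :=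
      FreeGroup.lift (Sum.elim FreeGroup.of fun _ => 1) with hrdef
    have hleft : r.comp (FreeGroup.map Sum.inl) = MonoidHom.id _ := by
      apply FreeGroup.ext_hom
      intro a
      simp [hrdef, FreeGroup.map.of, FreeGroup.lift_apply_of]
    have hright : r.comp (FreeGroup.map Sum.inr) = 1 := by
      apply FreeGroup.ext_hom
      intro a
      simp [hrdef, FreeGroup.map.of, FreeGroup.lift_apply_of]
    have hr : r W = w := by
      rw [hW, MonoidHom.map_mul, MonoidHom.map_inv]
      have e1 : r (FreeGroup.map Sum.inl w) = w := DFunLike.congr_fun hleft w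
      have e2 : r (FreeGroup.map Sum.inr w) = 1 := by
        simpa using DFunLike.congr_fun hright w
      rw [e1, e2]
      simp
    rw [h1] at hr
    simp at hr
    exact hwne hr.symm
  have hW1 : prodHom φ' ψ' W = 1 := by
    rw [hW, MonoidHom.map_mul, MonoidHom.map_inv, prodHom_inl, prodHom_inr, key]
    simp
  exact eta_ne_one _ h hWne hW1
end

section
/- Let G be a free group with basis g₁, …, g_n, let H be a free group, let φ, ψ : G → H be homomorphisms, and let u, v ∈ H be distinct. Let φ^v(g) = v⁻¹ φ(g) v. Suppose φ^v ∗ ψ : G ∗ G → H has remnant, and that for each generator g of G ∗ G the remnant word Rem_{φ^v ∗ ψ}(g) does not fully cancel in the reduced form of either product ((φ^v ∗ ψ)(g)) · v⁻¹u and u⁻¹v · ((φ^v ∗ ψ)(g)). Let Ĝ = G ∗ ⟨z⟩, Ĥ = H ∗ ⟨z⟩, let φ̂_u extend φ with φ̂_u(z) = u z u⁻¹, let ψ̂ extend ψ with ψ̂(z) = z, and let φ̂_u^v(x) = v⁻¹ φ̂_u(x) v. Then the homomorphism φ̂_u^v ∗ ψ̂ : Ĝ ∗ Ĝ → Ĥ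 has remnant. -/
/-! Basic definitions: cancellation in products of reduced words, remnant
of a homomorphism of free groups, and assorted constructions. -/

open FreeGroup

/-! ### Auxiliary word-level machinery -/

namespace RemAux

open FreeGroup List

variable {γ : Type*} [DecidableEq γ]

/-- No cancellation between two adjacent letters. -/
def RR : (γ × Bool) → (γ × Bool) → Prop := fun p q => ¬(p.1 = q.1 ∧ p.2 = !q.2)

theorem norm_def (x : FreeGroup γ) : norm x = x.toWord.length := rfl

theorem reduce_eq_self_of_chain' : ∀ {L : List (γ × Bool)}, L.Chain' RR → reduce L = L
  | [], _ => rfl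
  | [_], _ => rfl
  | p :: q :: L, h => by
      have hq : reduce (q :: L) = q :: L :=
        reduce_eq_self_of_chain' (List.isChain_cons_cons.mp h).2
      have hpq : RR p q := (List.isChain_cons_cons.mp h).1
      rw [reduce.cons, hq]
      dsimp only
      rw [if_neg hpq]

theorem chain'_reduce : ∀ (L : List (γ × Bool)), (reduce L).Chain' RR
  | [] => List.isChain_nil
  | p :: L => by
      have ih := chain'_reduce L
      rw [reduce.cons]
      cases h : reduce L with
      | nil => exact List.isChain_singleton _
      | cons q M =>
        rw [h] at ih
        dsimp only
        by_cases hc : p.1 = q.1 ∧ p.2 = !q.2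
        · rw [if_pos hc]; exact ih.tail
        · rw [if_neg hc]; exact List.isChain_cons_cons.mpr ⟨hc, ih⟩

theorem chain'_toWord (x : FreeGroup γ) : x.toWord.Chain' RR := by
  rw [← reduce_toWord]; exact chain'_reduce _

theorem norm_eq_length {x : FreeGroup γ} {L : List (γ × Bool)}
    (hx : x = mk L) (h : L.Chain' RR) : norm x = L.length := by
  rw [hx, norm_def, toWord_mk, reduce_eq_self_of_chain' h]

theorem toWord_concat_of_norm (x y : FreeGroup γ) (h : norm (x * y) = norm x + norm y) :
    (x * y).toWord = x.toWord ++ y.toWord := by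
  refine (toWord_mul_sublist x y).eq_of_length ?_
  simpa [norm_def, List.length_append] using h

private theorem exists_decomp_aux : ∀ (k : ℕ) (x y : FreeGroup γ), norm x ≤ k →
    ∃ x₁ d y₂ : FreeGroup γ, x = x₁ * d ∧ y = d⁻¹ * y₂ ∧
      norm x = norm x₁ + norm d ∧ norm y = norm d + norm y₂ ∧
      norm (x * y) = norm x₁ + norm y₂ := by
  intro k
  induction k with
  | zero =>
    intro x y hx
    have hx1 : x = 1 := norm_eq_zero.mp (Nat.le_antisymm hx (Nat.zero_le _))
    exact ⟨1, 1, y, by simp [hx1], by simp, by simp [hx1], by simp, by simp [hx1]⟩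
  | succ k ih =>
    intro x y hx
    rcases List.eq_nil_or_concat x.toWord with hX | ⟨X', ℓ, hX⟩
    · have hx1 : x = 1 := toWord_eq_nil_iff.mp hX
      exact ⟨1, 1, y, by simp [hx1], by simp, by simp [hx1], by simp, by simp [hx1]⟩
    rw [List.concat_eq_append] at hX
    rcases eq_or_ne y 1 with hy | hy
    · exact ⟨x, 1, 1, by simp, by simp [hy], by simp, by simp [hy], by simp [hy]⟩
    obtain ⟨m, Y', hY⟩ := List.exists_cons_of_ne_nil (fun h => hy (toWord_eq_nil_iff.mp h))
    by_cases hj : RR ℓ m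
    · -- no cancellation at the junction
      refine ⟨x, 1, y, by simp, by simp, by simp, by simp, ?_⟩
      have hxy : x * y = mk (x.toWord ++ y.toWord) := by
        rw [← mul_mk, mk_toWord, mk_toWord]
      have hch : (x.toWord ++ y.toWord).Chain' RR := by
        refine List.isChain_append.mpr ⟨chain'_toWord x, chain'_toWord y, ?_⟩
        intro p hp q hq
        rw [hX, List.getLast?_concat] at hp
        rw [hY, List.head?_cons] at hq
        obtain rfl : ℓ = p := by simpa using hp
        obtain rfl : m = q := by simpa using hq
        exact hj
      rw [norm_eq_length hxy hch]
      simp [norm_def, List.length_append]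
    · -- the junction letters cancel
      have hj' : ℓ.1 = m.1 ∧ ℓ.2 = !m.2 := not_not.mp hj
      have hXc : x.toWord.Chain' RR := chain'_toWord x
      have hX'c : X'.Chain' RR := by
        rw [hX] at hXc; exact (List.isChain_append.mp hXc).1
      have hY'c : Y'.Chain' RR := by
        have := chain'_toWord y
        rw [hY] at this; exact this.tail
      have hxeq : x = mk X' * mk [ℓ] := by rw [mul_mk, ← hX, mk_toWord]
      have hyeq : y = mk [m] * mk Y' := by
        rw [mul_mk]
        have : [m] ++ Y' = m :: Y' := rfl
        rw [this, ← hY, mk_toWord]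
      have hnx : norm x = X'.length + 1 := by
        rw [norm_def, hX, List.length_append]; rfl
      have hny : norm y = Y'.length + 1 := by
        rw [norm_def, hY]; rfl
      have hnx' : norm (mk X' : FreeGroup γ) = X'.length := norm_eq_length rfl hX'c
      have hny' : norm (mk Y' : FreeGroup γ) = Y'.length := norm_eq_length rfl hY'c
      have hnl : norm (mk [ℓ] : FreeGroup γ) = 1 := norm_eq_length rfl (List.isChain_singleton _)
      have hcancel : mk [ℓ] * mk [m] = (1 : FreeGroup γ) := by
        rw [mul_mk, show ([ℓ] ++ [m] : List (γ × Bool)) = [ℓ, m] from rfl,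
          ← reduce.self (L := [ℓ, m])]
        obtain ⟨a, b⟩ := ℓ
        obtain ⟨a', b'⟩ := m
        obtain ⟨h1, h2⟩ := hj'
        dsimp at h1 h2
        subst h1; subst h2
        have : reduce [(a, !b'), (a, b')] = [] := by
          rw [show [(a, !b'), (a, b')] = (a, !b') :: [(a, b')] from rfl, reduce.cons,
            reduce_singleton]
          dsimp only
          rw [if_pos ⟨rfl, rfl⟩]
        rw [this, ← one_eq_mk]
      have hml : (mk [ℓ] : FreeGroup γ)⁻¹ = mk [m] := by
        rw [inv_mk]
        congr 1
        obtain ⟨a, b⟩ := ℓ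
        obtain ⟨a', b'⟩ := m
        obtain ⟨h1, h2⟩ := hj'
        dsimp at h1 h2
        subst h1; subst h2
        simp [invRev]
      have hxy' : x * y = mk X' * mk Y' := by
        rw [hxeq, hyeq, mul_assoc, ← mul_assoc (mk [ℓ]), hcancel, one_mul]
      have hx'le : norm (mk X' : FreeGroup γ) ≤ k := by omega
      obtain ⟨x₁, d', y₂, e1, e2, e3, e4, e5⟩ := ih (mk X') (mk Y') hx'le
      have hx1 : x = x₁ * (d' * mk [ℓ]) := by rw [hxeq, e1, mul_assoc]
      have hy1 : y = (d' * mk [ℓ])⁻¹ * y₂ := by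
        rw [mul_inv_rev, hml, hyeq, e2, mul_assoc]
      have n1 : norm x ≤ norm x₁ + norm (d' * mk [ℓ]) := by
        rw [hx1]; exact norm_mul_le _ _
      have n2 : norm (d' * mk [ℓ]) ≤ norm d' + 1 := by
        have := norm_mul_le d' (mk [ℓ]); omega
      have n3 : norm y ≤ norm (d' * mk [ℓ]) + norm y₂ := by
        rw [hy1]
        calc norm ((d' * mk [ℓ])⁻¹ * y₂) ≤ norm (d' * mk [ℓ])⁻¹ + norm y₂ := norm_mul_le _ _
          _ = norm (d' * mk [ℓ]) + norm y₂ := by rw [norm_inv_eq]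
      have hxy2 : norm (x * y) = norm x₁ + norm y₂ := by rw [hxy']; exact e5
      exact ⟨x₁, d' * mk [ℓ], y₂, hx1, hy1, by omega, by omega, hxy2⟩

theorem exists_decomp (x y : FreeGroup γ) :
    ∃ x₁ d y₂ : FreeGroup γ, x = x₁ * d ∧ y = d⁻¹ * y₂ ∧
      norm x = norm x₁ + norm d ∧ norm y = norm d + norm y₂ ∧
      norm (x * y) = norm x₁ + norm y₂ :=
  exists_decomp_aux (norm x) x y le_rfl

theorem cancel_decomp (x y : FreeGroup γ) :
    ∃ x₁ d y₂ : FreeGroup γ, x = x₁ * d ∧ y = d⁻¹ * y₂ ∧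
      norm x = norm x₁ + norm d ∧ norm y = norm d + norm y₂ ∧
      norm (x * y) = norm x₁ + norm y₂ ∧ cancel x y = norm d := by
  obtain ⟨x₁, d, y₂, h1, h2, h3, h4, h5⟩ := exists_decomp x y
  refine ⟨x₁, d, y₂, h1, h2, h3, h4, h5, ?_⟩
  simp only [cancel]
  omega

theorem cancel_inv (a b : FreeGroup γ) : cancel b⁻¹ a⁻¹ = cancel a b := by
  simp only [cancel]
  rw [show b⁻¹ * a⁻¹ = (a * b)⁻¹ from (mul_inv_rev a b).symm, norm_inv_eq, norm_inv_eq,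
    norm_inv_eq, Nat.add_comm]

theorem cancel_le_right (a b : FreeGroup γ) : cancel a b ≤ norm b := by
  have h1 : norm a ≤ norm (a * b) + norm b := by
    calc norm a = norm (a * b * b⁻¹) := by rw [mul_inv_cancel_right]
      _ ≤ norm (a * b) + norm b⁻¹ := norm_mul_le _ _
      _ = norm (a * b) + norm b := by rw [norm_inv_eq]
  simp only [cancel]
  omega

theorem cancel_le_left (a b : FreeGroup γ) : cancel a b ≤ norm a := by
  have h1 : norm b ≤ norm a + norm (a * b) := by
    calc norm b = norm (a⁻¹ * (a * b)) := by rw [inv_mul_cancel_left]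
      _ ≤ norm a⁻¹ + norm (a * b) := norm_mul_le _ _
      _ = norm a + norm (a * b) := by rw [norm_inv_eq]
  simp only [cancel]
  omega

theorem cancel_one_left (b : FreeGroup γ) : cancel 1 b = 0 := by
  simp [cancel]

theorem cancel_one_right (a : FreeGroup γ) : cancel a 1 = 0 := by
  simp [cancel]

theorem prefix_align {g p₁ q₁ p₂ q₂ : FreeGroup γ} (h1 : g = p₁ * q₁) (h2 : g = p₂ * q₂)
    (n1 : norm g = norm p₁ + norm q₁) (n2 : norm g = norm p₂ + norm q₂)
    (hle : norm p₂ ≤ norm p₁) :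
    ∃ t, p₁ = p₂ * t ∧ norm p₁ = norm p₂ + norm t := by
  have w1 : g.toWord = p₁.toWord ++ q₁.toWord := by
    rw [h1]; exact toWord_concat_of_norm _ _ (by rw [← h1, ← n1])
  have w2 : g.toWord = p₂.toWord ++ q₂.toWord := by
    rw [h2]; exact toWord_concat_of_norm _ _ (by rw [← h2, ← n2])
  have hlen : p₂.toWord.length ≤ p₁.toWord.length := by
    rw [← norm_def, ← norm_def]; exact hle
  have hpre : p₂.toWord = p₁.toWord.take p₂.toWord.length := by
    have h3 : p₂.toWord ++ q₂.toWord = p₁.toWord ++ q₁.toWord := by rw [← w1, ← w2]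
    have h4 := congrArg (fun l => List.take p₂.toWord.length l) h3
    simpa [List.take_left, List.take_append,
      Nat.sub_eq_zero_of_le hlen] using h4
  refine ⟨mk (p₁.toWord.drop p₂.toWord.length), ?_, ?_⟩
  · calc p₁ = mk p₁.toWord := mk_toWord.symm
      _ = mk (p₁.toWord.take p₂.toWord.length ++ p₁.toWord.drop p₂.toWord.length) := by
          rw [List.take_append_drop]
      _ = mk (p₁.toWord.take p₂.toWord.length) * mk (p₁.toWord.drop p₂.toWord.length) := by
          rw [mul_mk]
      _ = p₂ * mk (p₁.toWord.drop p₂.toWord.length) := by rw [← hpre, mk_toWord]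
  · have hcd : (p₁.toWord.take p₂.toWord.length ++
        p₁.toWord.drop p₂.toWord.length).Chain' RR := by
      rw [List.take_append_drop]; exact chain'_toWord p₁
    have hdc : (p₁.toWord.drop p₂.toWord.length).Chain' RR :=
      (List.isChain_append.mp hcd).2.1
    rw [norm_eq_length rfl hdc, List.length_drop, norm_def, norm_def]
    omega

theorem cancel_le_cancel_self (s x : FreeGroup γ) (h : cancel x s ≤ cancel s⁻¹ x) :
    cancel x s ≤ cancel x x := by
  obtain ⟨A₁, d, x₂, hs, hx, ns, nx, _, hcd⟩ := cancel_decomp s⁻¹ x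
  obtain ⟨x₁, e, B₂, hx2, hs2, nx2, ns2, _, hce⟩ := cancel_decomp x s
  rw [hce]
  rw [hcd, hce] at h
  have hsd : s = d⁻¹ * A₁⁻¹ := by
    have := congrArg (fun z => z⁻¹) hs
    simpa [mul_inv_rev] using this
  have nsd : norm s = norm d⁻¹ + norm A₁⁻¹ := by
    have hns : norm s = norm A₁ + norm d := by rw [← norm_inv_eq (x := s)]; exact ns
    simp only [norm_inv_eq]
    omega
  have nse : norm s = norm e⁻¹ + norm B₂ := by
    simp only [norm_inv_eq]; exact ns2
  obtain ⟨t, hdt, ndt⟩ := prefix_align hsd hs2 nsd nse (by simp only [norm_inv_eq]; exact h)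
  have ndt' : norm d = norm e + norm t := by
    simpa [norm_inv_eq] using ndt
  have hxx : x * x = x₁ * (t * x₂) := by
    calc x * x = (x₁ * e) * (d⁻¹ * x₂) := by rw [← hx2, ← hx]
      _ = (x₁ * e) * ((e⁻¹ * t) * x₂) := by rw [← hdt]
      _ = x₁ * (t * x₂) := by group
  have hb : norm (x * x) ≤ norm x₁ + (norm t + norm x₂) := by
    rw [hxx]
    calc norm (x₁ * (t * x₂)) ≤ norm x₁ + norm (t * x₂) := norm_mul_le _ _
      _ ≤ norm x₁ + (norm t + norm x₂) := by
          exact Nat.add_le_add_left (norm_mul_le _ _) _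
  show norm e ≤ cancel x x
  simp only [cancel]
  omega

theorem cancel_le_cancel_self' (s x : FreeGroup γ) (h : cancel s⁻¹ x ≤ cancel x s) :
    cancel s⁻¹ x ≤ cancel x x := by
  have e1 : cancel x⁻¹ s = cancel s⁻¹ x := by
    have := cancel_inv (s⁻¹) x
    rwa [inv_inv] at this
  have e2 : cancel s⁻¹ x⁻¹ = cancel x s := cancel_inv x s
  have e3 : cancel x⁻¹ x⁻¹ = cancel x x := cancel_inv x x
  have := cancel_le_cancel_self s x⁻¹ (by rw [e1, e2]; exact h)
  rwa [e1, e3] at this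

section Hat

variable {β : Type*} [DecidableEq β]

theorem iotaZ_eq_map : (iotaZ : FreeGroup β →* FreeGroup (β ⊕ Unit)) = FreeGroup.map Sum.inl :=
  FreeGroup.ext_hom _ _ fun a => by
    simp [iotaZ, FreeGroup.lift_apply_of, FreeGroup.map.of]

theorem iotaZ_mk (L : List (β × Bool)) :
    iotaZ (mk L) = mk (L.map fun p => (Sum.inl p.1, p.2)) := by
  rw [iotaZ_eq_map, FreeGroup.map.mk]

theorem toWord_iotaZ (x : FreeGroup β) :
    (iotaZ x).toWord = x.toWord.map (fun p => ((Sum.inl p.1 : β ⊕ Unit), p.2)) := by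
  conv_lhs => rw [← mk_toWord (x := x)]
  rw [iotaZ_mk, toWord_mk, reduce_eq_self_of_chain']
  refine List.isChain_map_of_isChain _ ?_ (chain'_toWord x)
  intro p q hpq
  simpa [RR, Sum.inl.injEq] using hpq

theorem norm_iotaZ (x : FreeGroup β) : norm (iotaZ x) = norm x := by
  rw [norm_def, norm_def, toWord_iotaZ, List.length_map]

theorem mem_toWord_iotaZ {x : FreeGroup β} {p : (β ⊕ Unit) × Bool}
    (hp : p ∈ (iotaZ x).toWord) : ∃ b, p.1 = Sum.inl b := by
  rw [toWord_iotaZ] at hp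
  obtain ⟨q, _, rfl⟩ := List.mem_map.mp hp
  exact ⟨q.1, rfl⟩

/-- `Wz a e b = ι a * z^e * ι b`. -/
def Wz (a : FreeGroup β) (e : Bool) (b : FreeGroup β) : FreeGroup (β ⊕ Unit) :=
  iotaZ a * bpow (zGen β) e * iotaZ b

theorem bpow_zGen_eq_mk (e : Bool) :
    bpow (zGen β) e = mk [((Sum.inr () : β ⊕ Unit), e)] := by
  have hof : (zGen β) = mk [((Sum.inr () : β ⊕ Unit), true)] := by
    rw [zGen, ← mk_toWord (x := FreeGroup.of (Sum.inr ())), toWord_of]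
  cases e
  · show (zGen β)⁻¹ = _
    rw [hof, inv_mk]
    congr 1
  · exact hof

theorem Wz_eq_mk (a : FreeGroup β) (e : Bool) (b : FreeGroup β) :
    Wz a e b = mk ((iotaZ a).toWord ++ ((Sum.inr () : β ⊕ Unit), e) :: (iotaZ b).toWord) := by
  rw [Wz, bpow_zGen_eq_mk]
  conv_lhs => rw [← mk_toWord (x := iotaZ a), ← mk_toWord (x := iotaZ b)]
  rw [mul_mk, mul_mk]
  congr 1
  simp

theorem chain'_Wz_word (a : FreeGroup β) (e : Bool) (b : FreeGroup β) :
    ((iotaZ a).toWord ++ ((Sum.inr () : β ⊕ Unit), e) :: (iotaZ b).toWord).Chain' RR := by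
  refine List.isChain_append.mpr ⟨chain'_toWord _, ?_, ?_⟩
  · refine List.isChain_cons.mpr ⟨?_, chain'_toWord _⟩
    intro q hq
    obtain ⟨b', hb⟩ := mem_toWord_iotaZ (List.mem_of_mem_head? hq)
    simp [RR, hb]
  · intro p hp q hq
    obtain ⟨b', hb⟩ := mem_toWord_iotaZ (List.mem_of_mem_getLast? hp)
    obtain rfl : ((Sum.inr () : β ⊕ Unit), e) = q := by simpa using hq
    simp [RR, hb]

theorem norm_Wz (a : FreeGroup β) (e : Bool) (b : FreeGroup β) :
    norm (Wz a e b) = norm a + 1 + norm b := by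
  rw [norm_eq_length (Wz_eq_mk a e b) (chain'_Wz_word a e b)]
  have ha : (iotaZ a).toWord.length = norm a := by rw [← norm_def, norm_iotaZ]
  have hb : (iotaZ b).toWord.length = norm b := by rw [← norm_def, norm_iotaZ]
  rw [List.length_append, List.length_cons, ha, hb]
  omega

theorem iotaZ_eq_one_iff {b : FreeGroup β} : iotaZ b = 1 ↔ b = 1 := by
  constructor
  · intro h
    have := congrArg toWord h
    rw [toWord_iotaZ, toWord_one, List.map_eq_nil_iff] at this
    exact toWord_eq_nil_iff.mp this
  · rintro rfl; exact _root_.map_one iotaZ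

theorem norm_word5 (a b c : FreeGroup β) (e₁ e₂ : Bool) (h : b ≠ 1 ∨ e₁ = e₂) :
    norm (iotaZ a * bpow (zGen β) e₁ * iotaZ b * bpow (zGen β) e₂ * iotaZ c)
      = norm a + 1 + norm b + 1 + norm c := by
  have heq : iotaZ a * bpow (zGen β) e₁ * iotaZ b * bpow (zGen β) e₂ * iotaZ c
      = mk ((iotaZ a).toWord ++ ((Sum.inr () : β ⊕ Unit), e₁) ::
          ((iotaZ b).toWord ++ ((Sum.inr () : β ⊕ Unit), e₂) :: (iotaZ c).toWord)) := by
    rw [bpow_zGen_eq_mk, bpow_zGen_eq_mk]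
    conv_lhs => rw [← mk_toWord (x := iotaZ a), ← mk_toWord (x := iotaZ b),
      ← mk_toWord (x := iotaZ c)]
    rw [mul_mk, mul_mk, mul_mk, mul_mk]
    congr 1
    simp
  have hch : ((iotaZ a).toWord ++ ((Sum.inr () : β ⊕ Unit), e₁) ::
      ((iotaZ b).toWord ++ ((Sum.inr () : β ⊕ Unit), e₂) :: (iotaZ c).toWord)).Chain' RR := by
    refine List.isChain_append.mpr ⟨chain'_toWord _, ?_, ?_⟩
    · refine List.isChain_cons.mpr ⟨?_, ?_⟩
      · intro q hq
        cases hB : (iotaZ b).toWord with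
        | nil =>
          rcases h with hb | he
          · exact absurd (toWord_eq_nil_iff.mp hB) (fun hh => hb (iotaZ_eq_one_iff.mp hh))
          · subst he
            rw [hB] at hq
            obtain rfl : ((Sum.inr () : β ⊕ Unit), e₁) = q := by simpa using hq
            simp [RR]
        | cons p B' =>
          rw [hB] at hq
          obtain rfl : p = q := by simpa using hq
          have hpmem : p ∈ (iotaZ b).toWord := by rw [hB]; exact List.mem_cons_self
          obtain ⟨b', hb⟩ := mem_toWord_iotaZ hpmem
          simp [RR, hb]
      · exact chain'_Wz_word b e₂ c
    · intro p hp q hq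
      obtain ⟨b', hb⟩ := mem_toWord_iotaZ (List.mem_of_mem_getLast? hp)
      obtain rfl : ((Sum.inr () : β ⊕ Unit), e₁) = q := by simpa using hq
      simp [RR, hb]
  rw [norm_eq_length heq hch]
  have ha : (iotaZ a).toWord.length = norm a := by rw [← norm_def, norm_iotaZ]
  have hb : (iotaZ b).toWord.length = norm b := by rw [← norm_def, norm_iotaZ]
  have hc : (iotaZ c).toWord.length = norm c := by rw [← norm_def, norm_iotaZ]
  rw [List.length_append, List.length_cons, List.length_append, List.length_cons, ha, hb, hc]
  omega

theorem cancel_shift {γ' : Type*} [DecidableEq γ'] {X Y : FreeGroup γ} {x y : FreeGroup γ'}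
    {C : ℕ} (h1 : norm X + norm Y = norm x + norm y + C)
    (h2 : norm (X * Y) = norm (x * y) + C) :
    cancel X Y = cancel x y := by
  simp only [cancel]
  rw [h1, h2, Nat.add_sub_add_right]

theorem cancel_iotaZ (g g' : FreeGroup β) :
    cancel (iotaZ g) (iotaZ g') = cancel g g' :=
  cancel_shift (C := 0) (by simp [norm_iotaZ]) (by rw [← _root_.map_mul, norm_iotaZ, Nat.add_zero])

theorem iotaZ_mul_Wz (g a : FreeGroup β) (e : Bool) (b : FreeGroup β) :
    iotaZ g * Wz a e b = Wz (g * a) e b := by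
  simp [Wz, _root_.map_mul, mul_assoc]

theorem Wz_mul_iotaZ (a : FreeGroup β) (e : Bool) (b g : FreeGroup β) :
    Wz a e b * iotaZ g = Wz a e (b * g) := by
  simp [Wz, _root_.map_mul, mul_assoc]

theorem cancel_iotaZ_Wz (g a : FreeGroup β) (e : Bool) (b : FreeGroup β) :
    cancel (iotaZ g) (Wz a e b) = cancel g a :=
  cancel_shift (C := 1 + norm b)
    (by rw [norm_iotaZ, norm_Wz]; omega)
    (by rw [iotaZ_mul_Wz, norm_Wz]; omega)

theorem cancel_Wz_iotaZ (a : FreeGroup β) (e : Bool) (b g : FreeGroup β) :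
    cancel (Wz a e b) (iotaZ g) = cancel b g :=
  cancel_shift (C := norm a + 1)
    (by rw [norm_iotaZ, norm_Wz]; omega)
    (by rw [Wz_mul_iotaZ, norm_Wz]; omega)

theorem Wz_mul_Wz (a : FreeGroup β) (e : Bool) (b a' : FreeGroup β) (e' : Bool)
    (b' : FreeGroup β) :
    Wz a e b * Wz a' e' b'
      = iotaZ a * bpow (zGen β) e * iotaZ (b * a') * bpow (zGen β) e' * iotaZ b' := by
  simp [Wz, _root_.map_mul, mul_assoc]

theorem cancel_Wz_Wz (a : FreeGroup β) (e : Bool) (b a' : FreeGroup β) (e' : Bool)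
    (b' : FreeGroup β) (h : b * a' ≠ 1 ∨ e = e') :
    cancel (Wz a e b) (Wz a' e' b') = cancel b a' :=
  cancel_shift (C := norm a + norm b' + 2)
    (by rw [norm_Wz, norm_Wz]; omega)
    (by rw [Wz_mul_Wz, norm_word5 _ _ _ _ _ h]; omega)

theorem bpow_iotaZ (g : FreeGroup β) (e : Bool) :
    bpow (iotaZ g) e = iotaZ (bpow g e) := by
  cases e <;> simp [bpow]

theorem bpow_Wz (a : FreeGroup β) (e : Bool) :
    bpow (Wz a true a⁻¹) e = Wz a e a⁻¹ := by
  cases e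
  · show (Wz a true a⁻¹)⁻¹ = Wz a false a⁻¹
    simp [Wz, bpow, mul_inv_rev, mul_assoc]
  · rfl

end Hat

end RemAux

open RemAux in
theorem prodHom_of_inl' {α β : Type*} (φ ψ : FreeGroup α →* FreeGroup β) (i : α) :
    prodHom φ ψ (FreeGroup.of (Sum.inl i)) = φ (FreeGroup.of i) := by
  simp [prodHom]

open RemAux in
theorem prodHom_of_inr' {α β : Type*} (φ ψ : FreeGroup α →* FreeGroup β) (i : α) :
    prodHom φ ψ (FreeGroup.of (Sum.inr i)) = ψ (FreeGroup.of i) := by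
  simp [prodHom]

theorem conjHom_apply' {G H : Type*} [Group G] [Group H] (φ : G →* H) (v : H) (g : G) :
    conjHom φ v g = v⁻¹ * φ g * v := by
  simp [conjHom, MulAut.conj_apply]

theorem hatPhiF_of_inl' {α β : Type*} (φ : FreeGroup α →* FreeGroup β) (u : FreeGroup β)
    (i : α) : hatPhiF φ u (FreeGroup.of (Sum.inl i)) = iotaZ (φ (FreeGroup.of i)) := by
  simp [hatPhiF]

theorem hatPhiF_of_inr' {α β : Type*} (φ : FreeGroup α →* FreeGroup β) (u : FreeGroup β) :
    hatPhiF φ u (FreeGroup.of (Sum.inr ())) = iotaZ u * zGen β * (iotaZ u)⁻¹ := by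
  simp [hatPhiF]

theorem hatPsiF_of_inl' {α β : Type*} (ψ : FreeGroup α →* FreeGroup β) (i : α) :
    hatPsiF ψ (FreeGroup.of (Sum.inl i)) = iotaZ (ψ (FreeGroup.of i)) := by
  simp [hatPsiF]

theorem hatPsiF_of_inr' {α β : Type*} (ψ : FreeGroup α →* FreeGroup β) :
    hatPsiF ψ (FreeGroup.of (Sum.inr ())) = zGen β := by
  simp [hatPsiF]

set_option maxHeartbeats 2000000 in
/-- If `u ≠ v`, `φᵛ ∗ ψ` has remnant, and for each generator `c` of
`G ∗ G` the remnant `Rem_{φᵛ ∗ ψ}(c)` does not fully cancel in the reduced forms of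
`((φᵛ ∗ ψ)(c)) ⬝ v⁻¹u` and `u⁻¹v ⬝ ((φᵛ ∗ ψ)(c))`, then `φ̂ᵤᵛ ∗ ψ̂ : Ĝ ∗ Ĝ → Ĥ`
has remnant. -/
theorem hat_hasRemnant_of_remnant_survives {n : ℕ} {β : Type*} [DecidableEq β]
    (φ ψ : FreeGroup (Fin n) →* FreeGroup β) (u v : FreeGroup β) (huv : u ≠ v)
    (hrem : HasRemnant (prodHom (conjHom φ v) ψ))
    (hR : ∀ c : Fin n ⊕ Fin n,
      remnantSurvivesRightMul (prodHom (conjHom φ v) ψ) c (v⁻¹ * u))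
    (hL : ∀ c : Fin n ⊕ Fin n,
      remnantSurvivesLeftMul (prodHom (conjHom φ v) ψ) c (u⁻¹ * v)) :
    HasRemnant (prodHom (conjHom (hatPhiF φ u) (iotaZ v)) (hatPsiF ψ)) := by
  set η₀ : FreeGroup (Fin n ⊕ Fin n) →* FreeGroup β := prodHom (conjHom φ v) ψ with hη₀
  set ηh : FreeGroup ((Fin n ⊕ Unit) ⊕ (Fin n ⊕ Unit)) →* FreeGroup (β ⊕ Unit) :=
    prodHom (conjHom (hatPhiF φ u) (iotaZ v)) (hatPsiF ψ) with hηh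
  set s : FreeGroup β := v⁻¹ * u with hsdef
  have hs1 : s ≠ 1 := by
    intro h
    rw [hsdef, inv_mul_eq_one] at h
    exact huv h.symm
  have hsinv : s⁻¹ = u⁻¹ * v := by rw [hsdef, mul_inv_rev, inv_inv]
  -- images of the generators
  have himgL : ∀ i₀ : Fin n,
      ηh (FreeGroup.of (Sum.inl (Sum.inl i₀))) = iotaZ (η₀ (FreeGroup.of (Sum.inl i₀))) := by
    intro i₀
    rw [hηh, hη₀, prodHom_of_inl', prodHom_of_inl', conjHom_apply', conjHom_apply',
      hatPhiF_of_inl']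
    simp [_root_.map_mul, _root_.map_inv]
  have himgR : ∀ i₀ : Fin n,
      ηh (FreeGroup.of (Sum.inr (Sum.inl i₀))) = iotaZ (η₀ (FreeGroup.of (Sum.inr i₀))) := by
    intro i₀
    rw [hηh, hη₀, prodHom_of_inr', prodHom_of_inr', hatPsiF_of_inl']
  have himgz1 : ηh (FreeGroup.of (Sum.inl (Sum.inr ()))) = RemAux.Wz s true s⁻¹ := by
    rw [hηh, prodHom_of_inl', conjHom_apply', hatPhiF_of_inr']
    rw [hsdef]
    simp [RemAux.Wz, bpow, _root_.map_mul, _root_.map_inv, mul_inv_rev, mul_assoc]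
  have himgz2 : ηh (FreeGroup.of (Sum.inr (Sum.inr ()))) = RemAux.Wz 1 true 1 := by
    rw [hηh, prodHom_of_inr', hatPsiF_of_inr']
    simp [RemAux.Wz, bpow]
  -- bpow forms
  have hbicL : ∀ (j₀ : Fin n) (e : Bool),
      bpow (ηh (FreeGroup.of (Sum.inl (Sum.inl j₀)))) e
        = iotaZ (bpow (η₀ (FreeGroup.of (Sum.inl j₀))) e) := by
    intro j₀ e; rw [himgL, RemAux.bpow_iotaZ]
  have hbicR : ∀ (j₀ : Fin n) (e : Bool),
      bpow (ηh (FreeGroup.of (Sum.inr (Sum.inl j₀)))) e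
        = iotaZ (bpow (η₀ (FreeGroup.of (Sum.inr j₀))) e) := by
    intro j₀ e; rw [himgR, RemAux.bpow_iotaZ]
  have hWzS : ∀ e : Bool,
      bpow (ηh (FreeGroup.of (Sum.inl (Sum.inr ())))) e = RemAux.Wz s e s⁻¹ := by
    intro e; rw [himgz1]; exact RemAux.bpow_Wz s e
  have hWz1 : ∀ e : Bool,
      bpow (ηh (FreeGroup.of (Sum.inr (Sum.inr ())))) e = RemAux.Wz 1 e 1 := by
    intro e; rw [himgz2]
    have := RemAux.bpow_Wz (1 : FreeGroup β) e
    simpa using this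
  -- the main case: generators coming from G ∗ G
  have main_emb : ∀ (c : Fin n ⊕ Fin n) (ic : (Fin n ⊕ Unit) ⊕ (Fin n ⊕ Unit)),
      ηh (FreeGroup.of ic) = iotaZ (η₀ (FreeGroup.of c)) →
      ic = Sum.elim (fun j => Sum.inl (Sum.inl j)) (fun j => Sum.inr (Sum.inl j)) c →
      maxLeftCancel ηh ic + maxRightCancel ηh ic < FreeGroup.norm (ηh (FreeGroup.of ic)) := by
    intro c ic hic hicdef
    set x : FreeGroup β := η₀ (FreeGroup.of c) with hxdef
    have hnorm : FreeGroup.norm (ηh (FreeGroup.of ic)) = FreeGroup.norm x := by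
      rw [hic, RemAux.norm_iotaZ]
    have hA : maxLeftCancel ηh ic ≤ max (maxLeftCancel η₀ c) (cancel s⁻¹ x) := by
      apply Finset.sup_le
      rintro ⟨jh, ε⟩ hmem
      rw [Finset.mem_filter] at hmem
      have hne := hmem.2
      dsimp only
      rw [hic]
      rcases jh with (j₀ | ⟨⟩) | (j₀ | ⟨⟩)
      · rw [hbicL j₀ ε, RemAux.cancel_iotaZ]
        refine le_trans ?_ (le_max_left _ _)
        have hmem' : ((Sum.inl j₀ : Fin n ⊕ Fin n), ε) ∈
            Finset.univ.filter (fun je : (Fin n ⊕ Fin n) × Bool => je ≠ (c, false)) := by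
          simp only [Finset.mem_filter, Finset.mem_univ, true_and]
          intro hcon
          apply hne
          rw [Prod.mk.injEq] at hcon
          obtain ⟨h1, h2⟩ := hcon
          subst h2
          subst h1
          simp only [Sum.elim_inl, Sum.elim_inr] at hicdef
          rw [hicdef]
        exact Finset.le_sup (f := fun je : (Fin n ⊕ Fin n) × Bool =>
          cancel (bpow (η₀ (FreeGroup.of je.1)) je.2) (η₀ (FreeGroup.of c))) hmem'
      · rw [hWzS ε, RemAux.cancel_Wz_iotaZ]
        exact le_max_right _ _
      · rw [hbicR j₀ ε, RemAux.cancel_iotaZ]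
        refine le_trans ?_ (le_max_left _ _)
        have hmem' : ((Sum.inr j₀ : Fin n ⊕ Fin n), ε) ∈
            Finset.univ.filter (fun je : (Fin n ⊕ Fin n) × Bool => je ≠ (c, false)) := by
          simp only [Finset.mem_filter, Finset.mem_univ, true_and]
          intro hcon
          apply hne
          rw [Prod.mk.injEq] at hcon
          obtain ⟨h1, h2⟩ := hcon
          subst h2
          subst h1
          simp only [Sum.elim_inl, Sum.elim_inr] at hicdef
          rw [hicdef]
        exact Finset.le_sup (f := fun je : (Fin n ⊕ Fin n) × Bool =>
          cancel (bpow (η₀ (FreeGroup.of je.1)) je.2) (η₀ (FreeGroup.of c))) hmem'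
      · rw [hWz1 ε, RemAux.cancel_Wz_iotaZ, RemAux.cancel_one_left]
        exact Nat.zero_le _
    have hB : maxRightCancel ηh ic ≤ max (maxRightCancel η₀ c) (cancel x s) := by
      apply Finset.sup_le
      rintro ⟨jh, ε⟩ hmem
      rw [Finset.mem_filter] at hmem
      have hne := hmem.2
      dsimp only
      rw [hic]
      rcases jh with (j₀ | ⟨⟩) | (j₀ | ⟨⟩)
      · rw [hbicL j₀ ε, RemAux.cancel_iotaZ]
        refine le_trans ?_ (le_max_left _ _)
        have hmem' : ((Sum.inl j₀ : Fin n ⊕ Fin n), ε) ∈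
            Finset.univ.filter (fun je : (Fin n ⊕ Fin n) × Bool => je ≠ (c, false)) := by
          simp only [Finset.mem_filter, Finset.mem_univ, true_and]
          intro hcon
          apply hne
          rw [Prod.mk.injEq] at hcon
          obtain ⟨h1, h2⟩ := hcon
          subst h2
          subst h1
          simp only [Sum.elim_inl, Sum.elim_inr] at hicdef
          rw [hicdef]
        exact Finset.le_sup (f := fun je : (Fin n ⊕ Fin n) × Bool =>
          cancel (η₀ (FreeGroup.of c)) (bpow (η₀ (FreeGroup.of je.1)) je.2)) hmem'
      · rw [hWzS ε, RemAux.cancel_iotaZ_Wz]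
        exact le_max_right _ _
      · rw [hbicR j₀ ε, RemAux.cancel_iotaZ]
        refine le_trans ?_ (le_max_left _ _)
        have hmem' : ((Sum.inr j₀ : Fin n ⊕ Fin n), ε) ∈
            Finset.univ.filter (fun je : (Fin n ⊕ Fin n) × Bool => je ≠ (c, false)) := by
          simp only [Finset.mem_filter, Finset.mem_univ, true_and]
          intro hcon
          apply hne
          rw [Prod.mk.injEq] at hcon
          obtain ⟨h1, h2⟩ := hcon
          subst h2
          subst h1
          simp only [Sum.elim_inl, Sum.elim_inr] at hicdef
          rw [hicdef]
        exact Finset.le_sup (f := fun je : (Fin n ⊕ Fin n) × Bool =>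
          cancel (η₀ (FreeGroup.of c)) (bpow (η₀ (FreeGroup.of je.1)) je.2)) hmem'
      · rw [hWz1 ε, RemAux.cancel_iotaZ_Wz, RemAux.cancel_one_right]
        exact Nat.zero_le _
    -- relating cancel x x to the sups of η₀
    have hmemc : ((c, true) : (Fin n ⊕ Fin n) × Bool) ∈
        Finset.univ.filter (fun je : (Fin n ⊕ Fin n) × Bool => je ≠ (c, false)) := by
      simp
    have hxxL : cancel x x ≤ maxLeftCancel η₀ c := by
      have h := Finset.le_sup (f := fun je : (Fin n ⊕ Fin n) × Bool =>
        cancel (bpow (η₀ (FreeGroup.of je.1)) je.2) (η₀ (FreeGroup.of c))) hmemc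
      exact h
    have hxxR : cancel x x ≤ maxRightCancel η₀ c := by
      have h := Finset.le_sup (f := fun je : (Fin n ⊕ Fin n) × Bool =>
        cancel (η₀ (FreeGroup.of c)) (bpow (η₀ (FreeGroup.of je.1)) je.2)) hmemc
      exact h
    have hRem : maxLeftCancel η₀ c + maxRightCancel η₀ c < FreeGroup.norm x := hrem c
    have hRc : cancel x s + maxLeftCancel η₀ c < FreeGroup.norm x := hR c
    have hLc : cancel s⁻¹ x + maxRightCancel η₀ c < FreeGroup.norm x := by
      have h := hL c
      rw [remnantSurvivesLeftMul, ← hsinv] at h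
      exact h
    have hkey : cancel s⁻¹ x + cancel x s < FreeGroup.norm x := by
      rcases le_total (cancel x s) (cancel s⁻¹ x) with h | h
      · have := le_trans (RemAux.cancel_le_cancel_self s x h) hxxR
        omega
      · have := le_trans (RemAux.cancel_le_cancel_self' s x h) hxxL
        omega
    rw [hnorm]
    have hA' : maxLeftCancel ηh ic ≤ maxLeftCancel η₀ c ∨
        maxLeftCancel ηh ic ≤ cancel s⁻¹ x := le_max_iff.mp hA
    have hB' : maxRightCancel ηh ic ≤ maxRightCancel η₀ c ∨
        maxRightCancel ηh ic ≤ cancel x s := le_max_iff.mp hB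
    rcases hA' with hA' | hA' <;> rcases hB' with hB' | hB' <;> omega
  intro i
  rcases i with (j | ⟨⟩) | (j | ⟨⟩)
  · exact main_emb (Sum.inl j) (Sum.inl (Sum.inl j)) (himgL j) rfl
  · -- the φ-side z generator
    show maxLeftCancel ηh (Sum.inl (Sum.inr ())) + maxRightCancel ηh (Sum.inl (Sum.inr ()))
      < FreeGroup.norm (ηh (FreeGroup.of (Sum.inl (Sum.inr ()))))
    have hnorm : FreeGroup.norm (ηh (FreeGroup.of (Sum.inl (Sum.inr ()))))
        = FreeGroup.norm s + 1 + FreeGroup.norm s := by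
      rw [himgz1, RemAux.norm_Wz, norm_inv_eq]
    have hA : maxLeftCancel ηh (Sum.inl (Sum.inr ())) ≤ FreeGroup.norm s := by
      apply Finset.sup_le
      rintro ⟨jh, ε⟩ hmem
      rw [Finset.mem_filter] at hmem
      have hne := hmem.2
      dsimp only
      rw [himgz1]
      rcases jh with (j₀ | ⟨⟩) | (j₀ | ⟨⟩)
      · rw [hbicL j₀ ε, RemAux.cancel_iotaZ_Wz]
        exact RemAux.cancel_le_right _ _
      · have hε : ε = true := by
          cases ε
          · exact absurd rfl hne
          · rfl
        subst hε
        rw [hWzS true, RemAux.cancel_Wz_Wz _ _ _ _ _ _ (Or.inr rfl)]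
        exact RemAux.cancel_le_right _ _
      · rw [hbicR j₀ ε, RemAux.cancel_iotaZ_Wz]
        exact RemAux.cancel_le_right _ _
      · rw [hWz1 ε, RemAux.cancel_Wz_Wz _ _ _ _ _ _ (Or.inl (by simpa using hs1)),
          RemAux.cancel_one_left]
        exact Nat.zero_le _
    have hB : maxRightCancel ηh (Sum.inl (Sum.inr ())) ≤ FreeGroup.norm s := by
      apply Finset.sup_le
      rintro ⟨jh, ε⟩ hmem
      rw [Finset.mem_filter] at hmem
      have hne := hmem.2
      dsimp only
      rw [himgz1]
      rcases jh with (j₀ | ⟨⟩) | (j₀ | ⟨⟩)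
      · rw [hbicL j₀ ε, RemAux.cancel_Wz_iotaZ]
        calc cancel s⁻¹ _ ≤ FreeGroup.norm s⁻¹ := RemAux.cancel_le_left _ _
          _ = FreeGroup.norm s := norm_inv_eq
      · have hε : ε = true := by
          cases ε
          · exact absurd rfl hne
          · rfl
        subst hε
        rw [hWzS true, RemAux.cancel_Wz_Wz _ _ _ _ _ _ (Or.inr rfl)]
        calc cancel s⁻¹ s ≤ FreeGroup.norm s⁻¹ := RemAux.cancel_le_left _ _
          _ = FreeGroup.norm s := norm_inv_eq
      · rw [hbicR j₀ ε, RemAux.cancel_Wz_iotaZ]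
        calc cancel s⁻¹ _ ≤ FreeGroup.norm s⁻¹ := RemAux.cancel_le_left _ _
          _ = FreeGroup.norm s := norm_inv_eq
      · rw [hWz1 ε, RemAux.cancel_Wz_Wz _ _ _ _ _ _ (Or.inl (by simpa using inv_ne_one.mpr hs1)),
          RemAux.cancel_one_right]
        exact Nat.zero_le _
    rw [hnorm]
    omega
  · exact main_emb (Sum.inr j) (Sum.inr (Sum.inl j)) (himgR j) rfl
  · -- the ψ-side z generator
    show maxLeftCancel ηh (Sum.inr (Sum.inr ())) + maxRightCancel ηh (Sum.inr (Sum.inr ()))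
      < FreeGroup.norm (ηh (FreeGroup.of (Sum.inr (Sum.inr ()))))
    have hnorm : FreeGroup.norm (ηh (FreeGroup.of (Sum.inr (Sum.inr ())))) = 1 := by
      rw [himgz2, RemAux.norm_Wz]
      simp
    have hA : maxLeftCancel ηh (Sum.inr (Sum.inr ())) ≤ 0 := by
      apply Finset.sup_le
      rintro ⟨jh, ε⟩ hmem
      rw [Finset.mem_filter] at hmem
      have hne := hmem.2
      dsimp only
      rw [himgz2]
      rcases jh with (j₀ | ⟨⟩) | (j₀ | ⟨⟩)
      · rw [hbicL j₀ ε, RemAux.cancel_iotaZ_Wz, RemAux.cancel_one_right]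
      · rw [hWzS ε, RemAux.cancel_Wz_Wz _ _ _ _ _ _ (Or.inl (by simpa using inv_ne_one.mpr hs1)),
          RemAux.cancel_one_right]
      · rw [hbicR j₀ ε, RemAux.cancel_iotaZ_Wz, RemAux.cancel_one_right]
      · have hε : ε = true := by
          cases ε
          · exact absurd rfl hne
          · rfl
        subst hε
        rw [hWz1 true, RemAux.cancel_Wz_Wz _ _ _ _ _ _ (Or.inr rfl), RemAux.cancel_one_left]
    have hB : maxRightCancel ηh (Sum.inr (Sum.inr ())) ≤ 0 := by
      apply Finset.sup_le
      rintro ⟨jh, ε⟩ hmem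
      rw [Finset.mem_filter] at hmem
      have hne := hmem.2
      dsimp only
      rw [himgz2]
      rcases jh with (j₀ | ⟨⟩) | (j₀ | ⟨⟩)
      · rw [hbicL j₀ ε, RemAux.cancel_Wz_iotaZ, RemAux.cancel_one_left]
      · rw [hWzS ε, RemAux.cancel_Wz_Wz _ _ _ _ _ _ (Or.inl (by simpa using hs1)),
          RemAux.cancel_one_left]
      · rw [hbicR j₀ ε, RemAux.cancel_Wz_iotaZ, RemAux.cancel_one_left]
      · have hε : ε = true := by
          cases ε
          · exact absurd rfl hne
          · rfl
        subst hε
        rw [hWz1 true, RemAux.cancel_Wz_Wz _ _ _ _ _ _ (Or.inr rfl), RemAux.cancel_one_left]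
    rw [hnorm]
    omega
end

section
/- Let G be a free group with basis g₁, …, g_n with n ≥ 1, let φ : G → G be any endomorphism, and let v ∈ G. Then the homomorphism φ^v ∗ id : G ∗ G → G, where φ^v(g) = v⁻¹ φ(g) v and id is the identity homomorphism of G, does not have remnant. -/
/-! Basic definitions: cancellation in products of reduced words, remnant
of a homomorphism of free groups, and assorted constructions. -/

open FreeGroup

theorem my_norm_cancel {α : Type*} [DecidableEq α] (u : FreeGroup α) (i : α) (b : Bool)
    (h : u.toWord.head? = some (i, b)) :
    FreeGroup.norm (FreeGroup.mk [(i, !b)] * u) + 1 = FreeGroup.norm u := by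
  obtain ⟨t, ht⟩ : ∃ t, u.toWord = (i, b) :: t := by
    cases hw : u.toWord with
    | nil => rw [hw] at h; simp at h
    | cons x t => rw [hw] at h; simp at h; exact ⟨t, by rw [h]⟩
  have hred : reduce ((i, b) :: t) = (i, b) :: t := by rw [← ht]; exact reduce_toWord u
  have : FreeGroup.mk [(i, !b)] * u = FreeGroup.mk ((i, !b) :: (i, b) :: t) := by
    rw [show u = FreeGroup.mk u.toWord from (FreeGroup.mk_toWord (x := u)).symm, ht,
      FreeGroup.mul_mk, List.singleton_append]
  rw [this]
  have hr2 : reduce ((i, !b) :: (i, b) :: t) = t := by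
    rw [reduce.cons, hred]; simp
  unfold FreeGroup.norm
  rw [FreeGroup.toWord_mk, hr2, ht]
  simp


/-- For any endomorphism `φ` of the free group `G` of rank `n ≥ 1` and
any `v ∈ G`, the homomorphism `φᵛ ∗ id : G ∗ G → G` never has remnant. -/
theorem not_hasRemnant_conj_id {n : ℕ} (hn : 1 ≤ n)
    (φ : FreeGroup (Fin n) →* FreeGroup (Fin n)) (v : FreeGroup (Fin n)) :
    ¬ HasRemnant (prodHom (conjHom φ v) (MonoidHom.id (FreeGroup (Fin n)))) := by
  intro h
  obtain ⟨k⟩ : Nonempty (Fin n) := ⟨⟨0, hn⟩⟩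
  set η := prodHom (conjHom φ v) (MonoidHom.id (FreeGroup (Fin n))) with hη
  have hr : ∀ i : Fin n, η (FreeGroup.of (Sum.inr i)) = FreeGroup.of i := fun i => by
    simp [hη, prodHom, FreeGroup.lift_apply_of]
  set w := η (FreeGroup.of (Sum.inl k)) with hwdef
  by_cases hw : w = 1
  · have hlk := h (Sum.inl k)
    rw [← hwdef, hw, FreeGroup.norm_one] at hlk
    omega
  · have hn1 : 1 ≤ FreeGroup.norm w :=
      Nat.one_le_iff_ne_zero.mpr (fun h0 => hw (FreeGroup.norm_eq_zero.mp h0))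
    obtain ⟨⟨i, b⟩, t, hl⟩ : ∃ x t, w.toWord = x :: t := by
      cases hl : w.toWord with
      | nil => exact absurd (FreeGroup.toWord_eq_nil_iff.mp hl) hw
      | cons x t => exact ⟨x, t, rfl⟩
    have hhead : w.toWord.head? = some (i, b) := by rw [hl]; rfl
    cases b with
    | false =>
      have h1 : FreeGroup.norm (FreeGroup.mk [(i, true)] * w) + 1 = FreeGroup.norm w := by
        simpa using my_norm_cancel w i false hhead
      have hc : cancel (η (FreeGroup.of (Sum.inr i)))
          (bpow (η (FreeGroup.of (Sum.inl k))) true) = 1 := by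
        rw [hr i]
        show cancel (FreeGroup.of i) w = 1
        unfold cancel
        rw [FreeGroup.norm_of,
          show (FreeGroup.of i : FreeGroup (Fin n)) = FreeGroup.mk [(i, true)] from rfl]
        omega
      have hne : ((Sum.inl k, true) : (Fin n ⊕ Fin n) × Bool) ≠ (Sum.inr i, false) :=
        fun hcon => Sum.inl_ne_inr (congrArg Prod.fst hcon)
      have hb : 1 ≤ maxRightCancel η (Sum.inr i) := by
        rw [← hc]
        unfold maxRightCancel
        exact Finset.le_sup (f := fun je : (Fin n ⊕ Fin n) × Bool =>
            cancel (η (FreeGroup.of (Sum.inr i))) (bpow (η (FreeGroup.of je.1)) je.2))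
          (b := (Sum.inl k, true)) (Finset.mem_filter.2 ⟨Finset.mem_univ _, hne⟩)
      have hri := h (Sum.inr i)
      rw [hr i, FreeGroup.norm_of] at hri
      omega
    | true =>
      have h1 : FreeGroup.norm (FreeGroup.mk [(i, false)] * w) + 1 = FreeGroup.norm w := by
        simpa using my_norm_cancel w i true hhead
      have hinv : (FreeGroup.of i : FreeGroup (Fin n))⁻¹ = FreeGroup.mk [(i, false)] := by
        rw [show (FreeGroup.of i : FreeGroup (Fin n)) = FreeGroup.mk [(i, true)] from rfl,
          FreeGroup.inv_mk]
        rfl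
      have h2 : FreeGroup.norm (w⁻¹ * FreeGroup.of i) + 1 = FreeGroup.norm w := by
        rw [show w⁻¹ * FreeGroup.of i = ((FreeGroup.of i)⁻¹ * w)⁻¹ by group,
          FreeGroup.norm_inv_eq, hinv, h1]
      have hc : cancel (bpow (η (FreeGroup.of (Sum.inl k))) false)
          (η (FreeGroup.of (Sum.inr i))) = 1 := by
        rw [hr i]
        show cancel w⁻¹ (FreeGroup.of i) = 1
        unfold cancel
        rw [FreeGroup.norm_of, FreeGroup.norm_inv_eq]
        omega
      have hne : ((Sum.inl k, false) : (Fin n ⊕ Fin n) × Bool) ≠ (Sum.inr i, false) :=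
        fun hcon => Sum.inl_ne_inr (congrArg Prod.fst hcon)
      have hb : 1 ≤ maxLeftCancel η (Sum.inr i) := by
        rw [← hc]
        unfold maxLeftCancel
        exact Finset.le_sup (f := fun je : (Fin n ⊕ Fin n) × Bool =>
            cancel (bpow (η (FreeGroup.of je.1)) je.2) (η (FreeGroup.of (Sum.inr i))))
          (b := (Sum.inl k, false)) (Finset.mem_filter.2 ⟨Finset.mem_univ _, hne⟩)
      have hri := h (Sum.inr i)
      rw [hr i, FreeGroup.norm_of] at hri
      omega
end
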